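/- arXiv:1402.0183 — 4 statements merged into one kernel-verified Lean document; each statement's English description precedes it below -/
import Mathlib

section
/- Let C0 ≥ 1, h ≥ 0, t ∈ ℝ, u = it + h, and let s ≥ 1 be an integer. Let X be a random variable taking values in the nonnegative integers with X ≤ C0 almost surely, and let ν_m = E[X(X−1)⋯(X−m+1)] denote its m-th factorial moment. Then |E[e^{uX}] − 1 − Σ_{m=1}^s (ν_m/m!)(e^u − 1)^m| ≤ e^{hC0}(e^h + 1)^{s+1} ν_{s+1}/(s+1)!. -/
open MeasureTheory Finset
open scoped BigOperators

/-- `m`-th factorial moment `ν_m = E[X(X-1)⋯(X-m+1)]` of a ℕ-valued random variable. -/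
noncomputable def facMoment {Ω : Type*} [MeasurableSpace Ω] (μ : Measure Ω)
    (X : Ω → ℕ) (m : ℕ) : ℝ :=
  ∫ ω, (Nat.descFactorial (X ω) m : ℝ) ∂μ

lemma sum_choose_rec (z : ℂ) (s n : ℕ) :
    ∑ m ∈ range (s+1), ((n+1).choose m : ℂ) * z ^ m
      = (z + 1) * (∑ m ∈ range (s+1), (n.choose m : ℂ) * z ^ m)
        - (n.choose s : ℂ) * z ^ (s+1) := by
  have hL : ∑ m ∈ range (s+1), ((n+1).choose m : ℂ) * z ^ m
      = (∑ i ∈ range s, ((n.choose i : ℂ) * z ^ (i+1) + (n.choose (i+1) : ℂ) * z ^ (i+1))) + 1 := by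
    rw [Finset.sum_range_succ' (fun m => ((n+1).choose m : ℂ) * z ^ m)]
    simp [Nat.choose_succ_succ, add_mul]
  have hR1 : z * (∑ m ∈ range (s+1), (n.choose m : ℂ) * z ^ m)
      = (∑ i ∈ range s, (n.choose i : ℂ) * z ^ (i+1)) + (n.choose s : ℂ) * z ^ (s+1) := by
    rw [Finset.mul_sum, ← Finset.sum_range_succ (fun i => (n.choose i : ℂ) * z ^ (i+1))]
    congr 1; funext i; ring
  have hR2 : (∑ m ∈ range (s+1), (n.choose m : ℂ) * z ^ m)
      = (∑ i ∈ range s, (n.choose (i+1) : ℂ) * z ^ (i+1)) + 1 := by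
    rw [Finset.sum_range_succ' (fun m => (n.choose m : ℂ) * z ^ m)]
    simp
  rw [hL, add_mul, one_mul, hR1, hR2, Finset.sum_add_distrib]
  ring

lemma choose_bound (z : ℂ) (hz : 1 ≤ ‖(z + 1)‖) (s : ℕ) : ∀ n : ℕ,
    ‖((z+1) ^ n - ∑ m ∈ range (s+1), (n.choose m : ℂ) * z ^ m)‖
      ≤ (n.choose (s+1) : ℝ) * ‖z‖ ^ (s+1) * ‖(z+1)‖ ^ n := by
  intro n
  induction n with
  | zero =>
      have h0 : ∑ m ∈ range (s+1), ((Nat.choose 0 m : ℕ) : ℂ) * z ^ m = 1 := by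
        rw [Finset.sum_eq_single 0]
        · simp
        · intro m _ hm
          obtain ⟨k, rfl⟩ := Nat.exists_eq_succ_of_ne_zero hm
          simp
        · simp
      simp [h0]
  | succ n ih =>
      have hrec := sum_choose_rec z s n
      have hid : (z+1) ^ (n+1) - ∑ m ∈ range (s+1), ((n+1).choose m : ℂ) * z ^ m
          = (z+1) * ((z+1) ^ n - ∑ m ∈ range (s+1), (n.choose m : ℂ) * z ^ m)
            + (n.choose s : ℂ) * z ^ (s+1) := by
        rw [hrec]; ring
      rw [hid]
      calc ‖_‖ ≤ ‖((z+1) * ((z+1) ^ n - ∑ m ∈ range (s+1), (n.choose m : ℂ) * z ^ m))‖ + ‖((n.choose s : ℂ) * z ^ (s+1))‖ := norm_add_le _ _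
        _ = ‖(z+1)‖ * ‖((z+1) ^ n - ∑ m ∈ range (s+1), (n.choose m : ℂ) * z ^ m)‖ + (n.choose s : ℝ) * ‖z‖ ^ (s+1) := by
              simp [map_mul, map_pow]
        _ ≤ ‖(z+1)‖ * ((n.choose (s+1) : ℝ) * ‖z‖ ^ (s+1) * ‖(z+1)‖ ^ n) + ((n.choose s : ℝ) * ‖z‖ ^ (s+1)) * ‖(z+1)‖ ^ (n+1) := by
              refine add_le_add (mul_le_mul_of_nonneg_left ih (norm_nonneg _)) ?_
              refine le_mul_of_one_le_right (by positivity) ?_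
              exact one_le_pow₀ hz
        _ = ((n+1).choose (s+1) : ℝ) * ‖z‖ ^ (s+1) * ‖(z+1)‖ ^ (n+1) := by
              rw [Nat.choose_succ_succ]
              push_cast
              ring

/-- Relation (21): expansion of `E[e^{uX}]` in factorial moments, `u = it + h`. -/
theorem exp_moment_expansion (C0 h t : ℝ) (hC0 : 1 ≤ C0) (hh : 0 ≤ h)
    (u : ℂ) (hu : u = t * Complex.I + h) (s : ℕ) (hs : 1 ≤ s)
    (Ω : Type*) [MeasurableSpace Ω] (μ : Measure Ω) [IsProbabilityMeasure μ]
    (X : Ω → ℕ) (hX : Measurable X) (hbd : ∀ᵐ ω ∂μ, ((X ω : ℝ)) ≤ C0) :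
    ‖((∫ ω, Complex.exp (u * X ω) ∂μ) - 1 -
        ∑ m ∈ Finset.Icc 1 s,
          ((facMoment μ X m / (Nat.factorial m) : ℝ) : ℂ) * (Complex.exp u - 1) ^ m)‖ ≤
      Real.exp (h * C0) * (Real.exp h + 1) ^ (s + 1)
        * facMoment μ X (s + 1) / (Nat.factorial (s + 1)) := by
  set z : ℂ := Complex.exp u - 1 with hzdef
  have hwz : z + 1 = Complex.exp u := by rw [hzdef]; ring
  have hre : u.re = h := by rw [hu]; simp
  have habs : ‖(Complex.exp u)‖ = Real.exp h := by
    rw [Complex.norm_exp, hre]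
  have hz1 : 1 ≤ ‖(z + 1)‖ := by
    rw [hwz, habs]; exact Real.one_le_exp hh
  have hzle : ‖z‖ ≤ Real.exp h + 1 := by
    have := norm_sub_le (Complex.exp u) 1
    simpa [habs, hzdef] using this
  set N : ℕ := ⌊C0⌋₊ with hNdef
  have hXN : ∀ᵐ ω ∂μ, X ω ≤ N := hbd.mono fun ω hω => Nat.le_floor hω
  have hexp_eq : ∀ n : ℕ, Complex.exp (u * n) = (z+1)^n := fun n => by
    rw [mul_comm, Complex.exp_nat_mul, hwz]
  -- integrability of choose functions
  have hint : ∀ m : ℕ, Integrable (fun ω => ((X ω).choose m : ℝ)) μ := by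
    intro m
    refine Integrable.mono' (integrable_const ((N.choose m : ℝ)))
      (Measurable.aestronglyMeasurable ((measurable_from_top (f := fun n : ℕ => ((n.choose m : ℕ) : ℝ))).comp hX)) ?_
    filter_upwards [hXN] with ω hω
    rw [Real.norm_eq_abs, abs_of_nonneg (by positivity)]
    exact_mod_cast Nat.choose_le_choose m hω
  -- integrability of the exponential
  have hexpint : Integrable (fun ω => Complex.exp (u * X ω)) μ := by
    refine Integrable.mono' (integrable_const (Real.exp (h * C0)))
      (Measurable.aestronglyMeasurable
        ((measurable_from_top (f := fun n : ℕ => Complex.exp (u * n))).comp hX)) ?_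
    filter_upwards [hbd] with ω hω
    rw [Complex.norm_exp]
    have hre2 : (u * (X ω : ℂ)).re = h * (X ω : ℝ) := by
      rw [Complex.mul_re]
      simp [hre]
    rw [hre2]
    exact Real.exp_le_exp.mpr (mul_le_mul_of_nonneg_left hω hh)
  -- integrability of the terms
  have hterm : ∀ m, Integrable (fun ω => (((X ω).choose m : ℕ) : ℂ) * z ^ m) μ := by
    intro m
    have := (hint m).smul_const (z ^ m)
    simpa [Complex.real_smul] using this
  -- integral of each term
  have hIterm : ∀ m, ∫ ω, (((X ω).choose m : ℕ) : ℂ) * z ^ m ∂μ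
      = ((∫ ω, ((X ω).choose m : ℝ) ∂μ : ℝ) : ℂ) * z ^ m := by
    intro m
    rw [show (fun ω => (((X ω).choose m : ℕ) : ℂ) * z ^ m)
        = (fun ω => ((X ω).choose m : ℝ) • z ^ m) by
      funext ω; rw [Complex.real_smul]; norm_num]
    rw [integral_smul_const, Complex.real_smul]
  -- facMoment relation
  have hnu : ∀ m : ℕ, (facMoment μ X m / (m.factorial : ℝ)) = ∫ ω, ((X ω).choose m : ℝ) ∂μ := by
    intro m
    have : facMoment μ X m = (m.factorial : ℝ) * ∫ ω, ((X ω).choose m : ℝ) ∂μ := by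
      simp only [facMoment, Nat.descFactorial_eq_factorial_mul_choose]
      push_cast
      rw [integral_const_mul]
    rw [this]
    field_simp
  -- key rearrangement
  have hkey : (∫ ω, Complex.exp (u * X ω) ∂μ) - 1 -
        ∑ m ∈ Finset.Icc 1 s, ((facMoment μ X m / (Nat.factorial m) : ℝ) : ℂ) * z ^ m
      = ∫ ω, (Complex.exp (u * X ω)
          - ∑ m ∈ range (s+1), (((X ω).choose m : ℕ) : ℂ) * z ^ m) ∂μ := by
    rw [integral_sub hexpint (integrable_finset_sum _ fun m _ => hterm m),
      integral_finset_sum _ (fun m _ => hterm m)]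
    have hsplit : ∑ m ∈ range (s+1), ∫ ω, (((X ω).choose m : ℕ) : ℂ) * z ^ m ∂μ
        = 1 + ∑ m ∈ Finset.Icc 1 s,
            ((facMoment μ X m / (Nat.factorial m) : ℝ) : ℂ) * z ^ m := by
      rw [Finset.range_eq_Ico, Finset.sum_eq_sum_Ico_succ_bot (Nat.succ_pos s)]
      congr 1
      · rw [hIterm 0]; simp
      · rw [show Finset.Icc 1 s = Finset.Ico 1 (s+1) from (Finset.Ico_add_one_right_eq_Icc 1 s).symm]
        refine Finset.sum_congr rfl fun m hm => ?_
        rw [hIterm m, hnu m]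
    rw [hsplit]
    ring
  rw [hkey]
  -- pointwise a.e. bound
  set K : ℝ := Real.exp (h * C0) * (Real.exp h + 1) ^ (s + 1) with hKdef
  have hptb : ∀ᵐ ω ∂μ, ‖Complex.exp (u * X ω)
      - ∑ m ∈ range (s+1), (((X ω).choose m : ℕ) : ℂ) * z ^ m‖
      ≤ K * ((X ω).choose (s+1) : ℝ) := by
    filter_upwards [hbd] with ω hω
    rw [hexp_eq (X ω)]
    have h1 := choose_bound z hz1 s (X ω)
    refine h1.trans ?_
    have h2 : ‖(z+1)‖ ^ (X ω) ≤ Real.exp (h * C0) := by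
      rw [hwz, habs, ← Real.exp_nat_mul]
      refine Real.exp_le_exp.mpr ?_
      calc ((X ω : ℝ)) * h ≤ C0 * h := mul_le_mul_of_nonneg_right hω hh
        _ = h * C0 := mul_comm _ _
    calc ((X ω).choose (s+1) : ℝ) * ‖z‖ ^ (s+1) * ‖(z+1)‖ ^ (X ω)
        ≤ ((X ω).choose (s+1) : ℝ) * (Real.exp h + 1) ^ (s+1) * Real.exp (h * C0) := by
          gcongr
      _ = K * ((X ω).choose (s+1) : ℝ) := by rw [hKdef]; ring
  -- conclude
  have hg : Integrable (fun ω => Complex.exp (u * X ω)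
      - ∑ m ∈ range (s+1), (((X ω).choose m : ℕ) : ℂ) * z ^ m) μ :=
    hexpint.sub (integrable_finset_sum _ fun m _ => hterm m)
  calc ‖(∫ ω, (Complex.exp (u * X ω)
        - ∑ m ∈ range (s+1), (((X ω).choose m : ℕ) : ℂ) * z ^ m) ∂μ)‖
      ≤ ∫ ω, ‖Complex.exp (u * X ω)
        - ∑ m ∈ range (s+1), (((X ω).choose m : ℕ) : ℂ) * z ^ m‖ ∂μ := by
        exact norm_integral_le_integral_norm _
    _ ≤ ∫ ω, K * ((X ω).choose (s+1) : ℝ) ∂μ :=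
        integral_mono_ae hg.norm ((hint (s+1)).const_mul K) hptb
    _ = K * ∫ ω, ((X ω).choose (s+1) : ℝ) ∂μ := integral_const_mul _ _
    _ = Real.exp (h * C0) * (Real.exp h + 1) ^ (s + 1)
        * facMoment μ X (s + 1) / (Nat.factorial (s + 1)) := by
        rw [← hnu (s+1), hKdef]
        ring
end

section
/- Let C0 ≥ 1, h ≥ 0, t ∈ ℝ, u = it + h, and let s ≥ 1 be an integer. Let X be a random variable taking values in the nonnegative integers with X ≤ C0 almost surely, and let ν_m = E[X(X−1)⋯(X−m+1)] denote its m-th factorial moment. Then |E[X e^{uX}] − Σ_{m=1}^s (ν_m/(m−1)!) e^u (e^u − 1)^{m−1}| ≤ e^{hC0}(e^h + 1)^{s} ν_{s+1}/s!. -/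
open MeasureTheory Finset
open scoped BigOperators
open scoped Nat

lemma fact_prod (k s : ℕ) : k ! * ∏ j ∈ Finset.range (s+1), (k+1+j) = (k+s+1)! := by
  induction s with
  | zero => simp [Nat.factorial_succ, mul_comm]
  | succ s ih =>
      rw [Finset.prod_range_succ, ← mul_assoc, ih,
        show k + (s+1) + 1 = (k+s+1) + 1 from by omega, Nat.factorial_succ (k+s+1),
        show k + 1 + (s+1) = k+s+1+1 from by omega, mul_comm]

lemma beta_nat (k s : ℕ) :
    ∫ τ in (0:ℝ)..1, τ ^ k * (1 - τ) ^ s = (k ! : ℝ) * s ! / (k + s + 1)! := by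
  have hu : 0 < Complex.re ((k:ℂ)+1) := by simp; positivity
  have h := Complex.betaIntegral_eval_nat_add_one_right hu s
  rw [Complex.betaIntegral] at h
  simp only [add_sub_cancel_right] at h
  have h2 : ∀ x : ℝ, (x:ℂ) ^ ((k:ℂ)) * ((1:ℂ) - x) ^ ((s:ℂ)) = ((x ^ k * (1-x)^s : ℝ) : ℂ) := by
    intro x
    rw [Complex.cpow_natCast, show ((1:ℂ) - (x:ℝ)) = ((1 - x : ℝ) : ℂ) by push_cast; ring,
      Complex.cpow_natCast]
    push_cast; ring
  rw [intervalIntegral.integral_congr (g := fun x : ℝ => ((x ^ k * (1-x)^s : ℝ) : ℂ))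
    (fun x _ => h2 x)] at h
  rw [intervalIntegral.integral_ofReal] at h
  have hprod : (∏ j ∈ Finset.range (s+1), ((k:ℂ)+1+(j:ℕ))) = ((∏ j ∈ Finset.range (s+1), (k+1+j) : ℕ) : ℂ) := by
    push_cast; ring
  rw [← Complex.ofReal_inj, h, hprod]
  have hP0 : ((∏ j ∈ Finset.range (s+1), (k+1+j) : ℕ) : ℂ) ≠ 0 := by
    norm_cast
    exact Finset.prod_ne_zero_iff.2 fun j _ => by omega
  have hF0 : (((k+s+1)! : ℕ) : ℂ) ≠ 0 := by
    norm_cast; exact Nat.factorial_ne_zero _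
  have hfp : ((k ! : ℕ) : ℂ) * ((∏ j ∈ Finset.range (s+1), (k+1+j) : ℕ) : ℂ) = (((k+s+1)! : ℕ) : ℂ) := by
    norm_cast; exact fact_prod k s
  push_cast
  push_cast at hfp hP0 hF0
  field_simp
  linear_combination (-(s ! : ℂ)) * hfp

lemma int_rep (r N : ℕ) (w : ℂ) :
    ∫ τ in (0:ℝ)..1, ((1 - τ : ℝ) : ℂ) ^ r * (1 + τ * w) ^ N
      = ∑ k ∈ Finset.range (N+1),
          (N.choose k : ℂ) * ((k ! * r ! / (k + r + 1)! : ℝ) : ℂ) * w ^ k := by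
  have hpt : ∀ τ : ℝ, ((1 - τ : ℝ) : ℂ) ^ r * (1 + τ * w) ^ N
      = ∑ k ∈ Finset.range (N+1), (N.choose k : ℂ) * w ^ k * ((τ^k * (1-τ)^r : ℝ) : ℂ) := by
    intro τ
    rw [show ((1:ℂ) + τ * w) = ((τ:ℂ) * w + 1) by ring, add_pow, Finset.mul_sum]
    refine Finset.sum_congr rfl fun k hk => ?_
    push_cast
    ring
  rw [intervalIntegral.integral_congr (fun τ _ => hpt τ),
    intervalIntegral.integral_finset_sum]
  · refine Finset.sum_congr rfl fun k hk => ?_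
    rw [intervalIntegral.integral_const_mul, intervalIntegral.integral_ofReal, beta_nat]
    ring
  · intro k hk
    apply IntervalIntegrable.const_mul
    apply Continuous.intervalIntegrable
    exact Complex.continuous_ofReal.comp (by continuity)

lemma expand (n : ℕ) (z : ℂ) :
    (n:ℂ) * (1+z)^n = ∑ m ∈ Finset.Icc 1 n,
      ((n.descFactorial m : ℝ) : ℂ) * ((1+z) * z^(m-1) / (((m-1)! : ℕ) : ℂ)) := by
  cases n with
  | zero => simp
  | succ n =>
    have hbin : ∑ i ∈ Finset.range (n+1), ((n.choose i : ℕ) : ℂ) * z ^ i = (1+z)^n := by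
      rw [show (1:ℂ)+z = z+1 by ring, add_pow]
      exact Finset.sum_congr rfl fun i _ => by push_cast; ring
    rw [show Finset.Icc 1 (n+1) = Finset.Ico 1 (n+2) from by rw [show n + 2 = n + 1 + 1 from rfl, Finset.Ico_add_one_right_eq_Icc],
      Finset.sum_Ico_eq_sum_range]
    simp only [show n + 2 - 1 = n + 1 from rfl]
    have : ∀ i, ((n+1).descFactorial (1+i) : ℝ) = (n+1) * ((i ! : ℕ) * (n.choose i : ℕ)) := by
      intro i
      rw [show 1 + i = i + 1 from by omega, Nat.succ_descFactorial_succ,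
        Nat.descFactorial_eq_factorial_mul_choose]
      push_cast; ring
    calc ((n+1:ℕ):ℂ) * (1+z)^(n+1)
        = ((n+1:ℕ):ℂ) * (1+z) * ((1+z)^n) := by push_cast; ring
      _ = ((n+1:ℕ):ℂ) * (1+z) * ∑ i ∈ Finset.range (n+1), ((n.choose i : ℕ) : ℂ) * z ^ i := by
          rw [hbin]
      _ = _ := by
          rw [Finset.mul_sum]
          refine Finset.sum_congr rfl fun i _ => ?_
          rw [show ((((n+1).descFactorial (1+i) : ℕ):ℝ):ℂ)
              = ((n+1:ℕ):ℂ) * ((i ! : ℕ) : ℂ) * ((n.choose i : ℕ) : ℂ) from by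
            rw [show (((n+1).descFactorial (1+i) : ℕ):ℝ) = ((n+1:ℕ):ℝ) * ((i ! : ℕ):ℝ) * ((n.choose i : ℕ):ℝ) from by
              push_cast [this i]; ring]
            push_cast; ring]
          rw [show 1 + i - 1 = i from by omega]
          have hfac : ((i ! : ℕ) : ℂ) ≠ 0 := Nat.cast_ne_zero.2 (Nat.factorial_ne_zero i)
          field_simp

set_option maxHeartbeats 1000000 in
lemma key_bound (C0 h : ℝ) (hC0 : 1 ≤ C0) (hh : 0 ≤ h) (u : ℂ) (hre : u.re = h)
    (s : ℕ) (hs : 1 ≤ s) (n : ℕ) (hn : (n : ℝ) ≤ C0) :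
    ‖((n:ℂ) * Complex.exp (u * n)
        - ∑ m ∈ Finset.Icc 1 s, ((n.descFactorial m : ℝ) : ℂ)
            * (Complex.exp u * (Complex.exp u - 1) ^ (m-1) / (((m-1)! : ℕ) : ℂ)))‖
      ≤ Real.exp (h * C0) * (Real.exp h + 1) ^ s * (n.descFactorial (s+1)) / s ! := by
  set E := Complex.exp u with hE
  set w := E - 1 with hw
  have h1w : (1 : ℂ) + w = E := by rw [hw]; ring
  have hexp : Complex.exp (u * n) = (1 + w)^n := by
    rw [h1w, hE, ← Complex.exp_nat_mul, mul_comm]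
  have hB : (1:ℝ) ≤ Real.exp h := Real.one_le_exp hh
  have hEabs : ‖E‖ = Real.exp h := by rw [hE, Complex.norm_exp, hre]
  have hwabs : ‖w‖ ≤ Real.exp h + 1 := by
    rw [hw]
    refine (norm_sub_le _ _).trans ?_
    simp [hEabs]
  rcases le_or_gt n s with hns | hsn
  · -- n ≤ s : LHS is 0
    have hzero : (n:ℂ) * Complex.exp (u * n)
        - ∑ m ∈ Finset.Icc 1 s, ((n.descFactorial m : ℝ) : ℂ)
            * (E * w ^ (m-1) / (((m-1)! : ℕ) : ℂ)) = 0 := by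
      rw [hexp, expand n w]
      simp only [h1w]
      rw [sub_eq_zero]
      refine Finset.sum_subset (Finset.Icc_subset_Icc_right hns) fun m hm hnm => ?_
      have : n < m := by
        simp only [Finset.mem_Icc] at hm hnm; omega
      rw [Nat.descFactorial_eq_zero_iff_lt.2 this]
      simp
    rw [hzero]
    simp only [norm_zero]
    positivity
  · -- s < n
    obtain ⟨N, hN⟩ : ∃ N, n = s + 1 + N := ⟨n - s - 1, by omega⟩
    obtain ⟨r, hr⟩ : ∃ r, s = r + 1 := ⟨s - 1, by omega⟩
    have hsplit : (n:ℂ) * Complex.exp (u * n)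
        - ∑ m ∈ Finset.Icc 1 s, ((n.descFactorial m : ℝ) : ℂ)
            * (E * w ^ (m-1) / (((m-1)! : ℕ) : ℂ))
        = ∑ m ∈ Finset.Ioc s n, ((n.descFactorial m : ℝ) : ℂ)
            * (E * w ^ (m-1) / (((m-1)! : ℕ) : ℂ)) := by
      rw [hexp, expand n w]
      simp only [h1w]
      rw [show Finset.Icc 1 n = Finset.Ioc 0 n from by rw [← Finset.Icc_add_one_left_eq_Ioc]; rfl,
        show Finset.Icc 1 s = Finset.Ioc 0 s from by rw [← Finset.Icc_add_one_left_eq_Ioc]; rfl,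
        ← Finset.sum_Ioc_consecutive _ (Nat.zero_le s) hsn.le]
      ring
    have hreindex : ∑ m ∈ Finset.Ioc s n, ((n.descFactorial m : ℝ) : ℂ)
            * (E * w ^ (m-1) / (((m-1)! : ℕ) : ℂ))
        = ∑ i ∈ Finset.range (N+1), ((n.descFactorial (s+1+i) : ℝ) : ℂ)
            * (E * w ^ (s+i) / (((s+i)! : ℕ) : ℂ)) := by
      rw [← Finset.Ico_add_one_add_one_eq_Ioc, Finset.sum_Ico_eq_sum_range,
        show n + 1 - (s+1) = N + 1 from by omega]
      refine Finset.sum_congr rfl fun i _ => ?_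
      rw [show s + 1 + i - 1 = s + i from by omega]
    have hCst : ∑ i ∈ Finset.range (N+1), ((n.descFactorial (s+1+i) : ℝ) : ℂ)
            * (E * w ^ (s+i) / (((s+i)! : ℕ) : ℂ))
        = (((n.descFactorial (s+1) : ℕ) : ℂ) * E * w^s / ((r ! : ℕ) : ℂ))
            * ∫ τ in (0:ℝ)..1, ((1 - τ : ℝ) : ℂ) ^ r * (1 + τ * w) ^ N := by
      rw [int_rep, Finset.mul_sum]
      refine Finset.sum_congr rfl fun i _ => ?_
      have hdf : n.descFactorial (s+1+i) = (i ! * N.choose i) * n.descFactorial (s+1) := by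
        rw [← Nat.descFactorial_mul_descFactorial (show s+1 ≤ s+1+i by omega),
          show s+1+i - (s+1) = i from by omega, show n - (s+1) = N from by omega,
          Nat.descFactorial_eq_factorial_mul_choose]
      have hfr : ((r ! : ℕ) : ℂ) ≠ 0 := Nat.cast_ne_zero.2 (Nat.factorial_ne_zero r)
      have hfsi : (((i+r+1)! : ℕ) : ℂ) ≠ 0 := Nat.cast_ne_zero.2 (Nat.factorial_ne_zero _)
      rw [hdf, show (s+i)! = (i+r+1)! from by congr 1; omega,
        show w^(s+i) = w^s * w^i from by rw [← pow_add]]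
      push_cast
      field_simp
    rw [hsplit, hreindex, hCst, norm_mul]
    have hIbound : ‖∫ τ in (0:ℝ)..1, ((1 - τ : ℝ) : ℂ) ^ r * (1 + τ * w) ^ N‖
        ≤ (Real.exp h) ^ N / (r+1) := by
      have hint : IntervalIntegrable (fun τ : ℝ => (1-τ)^r * (Real.exp h)^N)
          MeasureTheory.volume 0 1 := (Continuous.intervalIntegrable (by continuity) _ _)
      refine (intervalIntegral.norm_integral_le_of_norm_le (by norm_num) ?_ hint).trans ?_
      · refine MeasureTheory.ae_of_all _ fun τ hτ => ?_
        obtain ⟨hτ0, hτ1⟩ := hτ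
        have h1τ : (0:ℝ) ≤ 1 - τ := by linarith
        rw [norm_mul, norm_pow, norm_pow, Complex.norm_real, Real.norm_eq_abs,
          abs_of_nonneg h1τ]
        refine mul_le_mul_of_nonneg_left (pow_le_pow_left₀ (norm_nonneg _) ?_ N)
          (by positivity)
        calc ‖(1:ℂ) + τ * w‖ = ‖((1-τ:ℝ):ℂ) + τ * E‖ := by
              rw [hw]; congr 1; push_cast; ring
          _ ≤ ‖((1-τ:ℝ):ℂ)‖ + ‖(τ:ℂ) * E‖ := norm_add_le _ _
          _ = (1-τ) + τ * Real.exp h := by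
              rw [norm_mul, Complex.norm_real, Complex.norm_real, Real.norm_eq_abs,
                Real.norm_eq_abs, abs_of_nonneg h1τ, abs_of_nonneg hτ0.le,
                hEabs]
          _ ≤ (1-τ) * Real.exp h + τ * Real.exp h := by nlinarith
          _ = Real.exp h := by ring
      · have hib : (∫ τ in (0:ℝ)..1, (1-τ:ℝ)^r) = 1/(r+1) := by
          rw [show (fun τ : ℝ => (1-τ)^r) = (fun τ : ℝ => ((fun x:ℝ => x^r) (1-τ))) from rfl,
            intervalIntegral.integral_comp_sub_left (fun x : ℝ => x^r) 1, _root_.integral_pow]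
          norm_num
        rw [intervalIntegral.integral_mul_const, hib]
        exact le_of_eq (by ring)
    have hCabs : ‖((n.descFactorial (s+1) : ℕ) : ℂ) * E * w^s / ((r ! : ℕ) : ℂ)‖
        ≤ (n.descFactorial (s+1) : ℝ) * Real.exp h * (Real.exp h + 1)^s / r ! := by
      rw [norm_div, norm_mul, norm_mul, norm_pow]
      rw [Complex.norm_natCast, Complex.norm_natCast, hEabs]
      gcongr
    calc ‖((n.descFactorial (s+1) : ℕ) : ℂ) * E * w^s / ((r ! : ℕ) : ℂ)‖
          * ‖∫ τ in (0:ℝ)..1, ((1 - τ : ℝ) : ℂ) ^ r * (1 + τ * w) ^ N‖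
        ≤ ((n.descFactorial (s+1) : ℝ) * Real.exp h * (Real.exp h + 1)^s / r !)
          * ((Real.exp h) ^ N / (r+1)) := by
          exact mul_le_mul hCabs hIbound (norm_nonneg _) (by positivity)
      _ = (n.descFactorial (s+1) : ℝ) * (Real.exp h + 1)^s * (Real.exp h)^(N+1) / s ! := by
          have hr1 : (r ! : ℝ) ≠ 0 := by positivity
          have hr2 : ((r:ℝ) + 1) ≠ 0 := by positivity
          rw [hr, Nat.factorial_succ, pow_succ]
          push_cast
          field_simp
          ring
      _ ≤ Real.exp (h * C0) * (Real.exp h + 1) ^ s * (n.descFactorial (s+1)) / s ! := by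
          have hexpb : (Real.exp h)^(N+1) ≤ Real.exp (h * C0) := by
            rw [← Real.exp_nat_mul]
            refine Real.exp_le_exp.2 ?_
            have : ((N:ℝ) + 1) ≤ C0 := by
              have : ((N:ℝ) + 1) ≤ (n:ℝ) := by
                have : (N:ℕ) + 1 ≤ n := by omega
                exact_mod_cast this
              linarith
            calc ((N+1 : ℕ):ℝ) * h = h * ((N:ℝ)+1) := by push_cast; ring
              _ ≤ h * C0 := by nlinarith
          calc (n.descFactorial (s+1) : ℝ) * (Real.exp h + 1)^s * (Real.exp h)^(N+1) / s !
              ≤ (n.descFactorial (s+1) : ℝ) * (Real.exp h + 1)^s * Real.exp (h*C0) / s ! := by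
                gcongr
            _ = Real.exp (h * C0) * (Real.exp h + 1) ^ s * (n.descFactorial (s+1)) / s ! := by
                ring

/-- Relation (22): expansion of `E[X e^{uX}]` in factorial moments, `u = it + h`. -/
theorem exp_moment_derivative_expansion (C0 h t : ℝ) (hC0 : 1 ≤ C0) (hh : 0 ≤ h)
    (u : ℂ) (hu : u = t * Complex.I + h) (s : ℕ) (hs : 1 ≤ s)
    (Ω : Type*) [MeasurableSpace Ω] (μ : Measure Ω) [IsProbabilityMeasure μ]
    (X : Ω → ℕ) (hX : Measurable X) (hbd : ∀ᵐ ω ∂μ, ((X ω : ℝ)) ≤ C0) :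
    ‖((∫ ω, (X ω : ℂ) * Complex.exp (u * X ω) ∂μ) -
        ∑ m ∈ Finset.Icc 1 s,
          ((facMoment μ X m / (Nat.factorial (m - 1)) : ℝ) : ℂ)
            * Complex.exp u * (Complex.exp u - 1) ^ (m - 1))‖ ≤
      Real.exp (h * C0) * (Real.exp h + 1) ^ s
        * facMoment μ X (s + 1) / (Nat.factorial s) := by
  have hre : u.re = h := by simp [hu]
  have hXC : ∀ᵐ ω ∂μ, (X ω : ℝ) ≤ C0 := hbd
  -- measurability of compositions
  have hmeas : ∀ (f : ℕ → ℂ), AEStronglyMeasurable (fun ω => f (X ω)) μ :=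
    fun f => (measurable_from_top.comp hX).aestronglyMeasurable
  have hmeasR : ∀ (f : ℕ → ℝ), AEStronglyMeasurable (fun ω => f (X ω)) μ :=
    fun f => (measurable_from_top.comp hX).aestronglyMeasurable
  -- integrability of descFactorial moments
  have hintDF : ∀ m : ℕ, Integrable (fun ω => ((X ω).descFactorial m : ℝ)) μ := by
    intro m
    refine Integrable.mono' (integrable_const (C0 ^ m)) (hmeasR (fun n => ((n.descFactorial m : ℝ)))) ?_
    filter_upwards [hXC] with ω hω
    rw [Real.norm_eq_abs, abs_of_nonneg (by positivity)]
    calc ((X ω).descFactorial m : ℝ) ≤ ((X ω : ℕ) : ℝ) ^ m := by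
          exact_mod_cast Nat.descFactorial_le_pow _ m
      _ ≤ C0 ^ m := pow_le_pow_left₀ (by positivity) hω m
  -- integrability of the main function
  have hint1 : Integrable (fun ω => (X ω : ℂ) * Complex.exp (u * X ω)) μ := by
    refine Integrable.mono' (integrable_const (C0 * Real.exp (h * C0))) (hmeas (fun n => (n : ℂ) * Complex.exp (u * n))) ?_
    filter_upwards [hXC] with ω hω
    rw [norm_mul, Complex.norm_natCast]
    have : ‖Complex.exp (u * (X ω : ℂ))‖ = Real.exp (h * X ω) := by
      rw [Complex.norm_exp]
      congr 1
      simp [Complex.mul_re, hre]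
    rw [this]
    have h1 : Real.exp (h * X ω) ≤ Real.exp (h * C0) :=
      Real.exp_le_exp.2 (by nlinarith [(X ω).cast_nonneg (α := ℝ)])
    have h0 : (0:ℝ) ≤ (X ω : ℝ) := (X ω).cast_nonneg
    nlinarith [Real.exp_pos (h * X ω)]
  -- integrability of each sum term
  have hintT : ∀ m : ℕ, Integrable (fun ω => ((X ω).descFactorial m : ℝ) *
      (Complex.exp u * (Complex.exp u - 1) ^ (m-1) / (((m-1)! : ℕ) : ℂ))) μ := by
    intro m
    have := ((hintDF m).ofReal (𝕜 := ℂ)).mul_const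
      (Complex.exp u * (Complex.exp u - 1) ^ (m-1) / (((m-1)! : ℕ) : ℂ))
    exact this
  -- rewrite sum coefficients as integrals
  have hsum : ∑ m ∈ Finset.Icc 1 s,
      ((facMoment μ X m / (Nat.factorial (m - 1)) : ℝ) : ℂ)
        * Complex.exp u * (Complex.exp u - 1) ^ (m - 1)
      = ∫ ω, (∑ m ∈ Finset.Icc 1 s, ((X ω).descFactorial m : ℝ) *
          (Complex.exp u * (Complex.exp u - 1) ^ (m-1) / (((m-1)! : ℕ) : ℂ))) ∂μ := by
    rw [integral_finset_sum _ (fun m _ => hintT m)]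
    refine Finset.sum_congr rfl fun m _ => ?_
    rw [integral_mul_const]
    rw [show (∫ ω, (((X ω).descFactorial m : ℝ) : ℂ) ∂μ)
        = ((facMoment μ X m : ℝ) : ℂ) from (integral_ofReal (f := fun ω => ((X ω).descFactorial m : ℝ)))]
    have hf : (((m-1)! : ℕ) : ℂ) ≠ 0 := Nat.cast_ne_zero.2 (Nat.factorial_ne_zero _)
    push_cast
    field_simp
  rw [hsum, ← integral_sub hint1 (integrable_finset_sum _ (fun m _ => hintT m))]
  -- bound
  have hnorm : ‖∫ ω, ((X ω : ℂ) * Complex.exp (u * X ω)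
      - ∑ m ∈ Finset.Icc 1 s, ((X ω).descFactorial m : ℝ) *
          (Complex.exp u * (Complex.exp u - 1) ^ (m-1) / (((m-1)! : ℕ) : ℂ))) ∂μ‖
      ≤ ∫ ω, Real.exp (h * C0) * (Real.exp h + 1) ^ s * ((X ω).descFactorial (s+1)) / s ! ∂μ := by
    refine (norm_integral_le_integral_norm _).trans ?_
    refine integral_mono_ae ?_ ?_ ?_
    · exact (hint1.sub (integrable_finset_sum _ (fun m _ => hintT m))).norm
    · have := (hintDF (s+1)).const_mul (Real.exp (h * C0) * (Real.exp h + 1) ^ s / s !)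
      refine this.congr ?_
      filter_upwards with ω
      ring
    · filter_upwards [hXC] with ω hω
      exact key_bound C0 h hC0 hh u hre s hs (X ω) hω
  refine hnorm.trans (le_of_eq ?_)
  rw [show (fun ω => Real.exp (h * C0) * (Real.exp h + 1) ^ s * ((X ω).descFactorial (s+1) : ℝ) / s !)
      = (fun ω => (Real.exp (h * C0) * (Real.exp h + 1) ^ s / s !) * ((X ω).descFactorial (s+1) : ℝ)) from by
    funext ω; ring]
  rw [integral_const_mul]
  rw [facMoment]
  ring
end

section
/- Let C0 ≥ 1, h ≥ 0, t ∈ ℝ, u = it + h, and let X_1,…,X_n be 1-dependent random variables taking values in the nonnegative integers with X_i ≤ C0 almost surely. Set a = e^{hC0}(2+h)√C0, Y_j = e^{uX_j} − 1 and Ψ_{jk} = Ê(Y_j, Y_{j+1}, …, Y_k). Assume a²·max_{1≤j≤n} ν_1(j) ≤ 1/100. Then for every k with 4 ≤ k ≤ n and every j with 1 ≤ j ≤ k−3: |Ψ_{jk}| ≤ 250 a⁴ (1/5)^{k−j} Σ_{l=0}^{3} ν_1(k−l)², where ν_1(k) = E[X_k]. -/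
open MeasureTheory ProbabilityTheory Filter Finset
open scoped BigOperators

/-- `X 1, …, X n` is a 1-dependent sequence: for `1 ≤ r ≤ n - 2` the σ-algebra
generated by `X 1, …, X r` is independent of the one generated by `X (r+2), …, X n`. -/
def OneDependent {Ω : Type*} [MeasurableSpace Ω] (μ : Measure Ω) (n : ℕ)
    (X : ℕ → Ω → ℕ) : Prop :=
  ∀ r : ℕ, 1 ≤ r → r + 2 ≤ n →
    Indep (⨆ i ∈ Finset.Icc 1 r, MeasurableSpace.comap (X i) ⊤)
          (⨆ i ∈ Finset.Icc (r + 2) n, MeasurableSpace.comap (X i) ⊤) μ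

/-- Heinrich's cumulant functional `Ê(U_j, …, U_k)`, defined recursively by
`Ê(U_j) = E U_j` and
`Ê(U_j,…,U_k) = E[U_j⋯U_k] - Σ_{l=j}^{k-1} Ê(U_j,…,U_l)·E[U_{l+1}⋯U_k]`. -/
noncomputable def heinrichE {Ω : Type*} [MeasurableSpace Ω] (μ : Measure Ω)
    (U : ℕ → Ω → ℂ) (j : ℕ) (k : ℕ) : ℂ :=
  (∫ ω, ∏ i ∈ Finset.Icc j k, U i ω ∂μ)
    - ∑ l ∈ (Finset.Ico j k).attach,
        heinrichE μ U j l.1 * ∫ ω, ∏ i ∈ Finset.Icc (l.1 + 1) k, U i ω ∂μ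
termination_by k
decreasing_by exact (Finset.mem_Ico.mp l.2).2

/-- Heinrich's functions `φ_k(u)`: `φ_1(u) = E e^{uX_1}` and, for `k ≥ 2`,
`φ_k(u) = 1 + E Y_k + Σ_{j=1}^{k-1} Ψ_{jk} / (φ_j(u)⋯φ_{k-1}(u))`, where
`Y_j = e^{uX_j} - 1` and `Ψ_{jk} = Ê(Y_j,…,Y_k)`. -/
noncomputable def heinrichPhi {Ω : Type*} [MeasurableSpace Ω] (μ : Measure Ω)
    (X : ℕ → Ω → ℕ) (u : ℂ) : ℕ → ℂ
  | 0 => 1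
  | 1 => ∫ ω, Complex.exp (u * (X 1 ω : ℂ)) ∂μ
  | k + 2 =>
      1 + (∫ ω, (Complex.exp (u * (X (k + 2) ω : ℂ)) - 1) ∂μ)
        + ∑ j ∈ (Finset.Icc 1 (k + 1)).attach,
            heinrichE μ (fun i ω => Complex.exp (u * (X i ω : ℂ)) - 1) j.1 (k + 2) /
              ∏ i ∈ (Finset.Icc j.1 (k + 1)).attach, heinrichPhi μ X u i.1
termination_by k => k
decreasing_by
  exact lt_of_le_of_lt (Finset.mem_Icc.mp i.2).2 (Nat.lt_succ_self _)


section HeinrichAux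

variable {Ω : Type*} [MeasurableSpace Ω] {μ : Measure Ω} [IsProbabilityMeasure μ]
  {n : ℕ} {X : ℕ → Ω → ℕ} {C0 h t : ℝ} {u : ℂ}

set_option linter.unusedSectionVars false
set_option linter.unusedVariables false


lemma my_cs {Ω : Type*} [MeasurableSpace Ω] {μ : Measure Ω} [IsProbabilityMeasure μ]
    {F G : Ω → ℝ} (hF : Measurable F) (hG : Measurable G)
    (h0F : ∀ ω, 0 ≤ F ω) (h0G : ∀ ω, 0 ≤ G ω) {CF CG : ℝ}
    (hbF : ∀ᵐ ω ∂μ, F ω ≤ CF) (hbG : ∀ᵐ ω ∂μ, G ω ≤ CG) :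
    ∫ ω, F ω * G ω ∂μ ≤ Real.sqrt (∫ ω, F ω ^ 2 ∂μ) * Real.sqrt (∫ ω, G ω ^ 2 ∂μ) := by
  have hpq : (2:ℝ).HolderConjugate 2 := Real.holderConjugate_iff.2 ⟨one_lt_two, by norm_num⟩
  have hFm : MemLp F (ENNReal.ofReal 2) μ :=
    MemLp.of_bound hF.aestronglyMeasurable CF <| hbF.mono fun ω h => by
      rw [Real.norm_eq_abs, abs_of_nonneg (h0F ω)]; exact h
  have hGm : MemLp G (ENNReal.ofReal 2) μ :=
    MemLp.of_bound hG.aestronglyMeasurable CG <| hbG.mono fun ω h => by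
      rw [Real.norm_eq_abs, abs_of_nonneg (h0G ω)]; exact h
  have h := integral_mul_le_Lp_mul_Lq_of_nonneg hpq (ae_of_all _ h0F) (ae_of_all _ h0G) hFm hGm
  have e2 : ∀ x : ℝ, x ^ (2:ℝ) = x ^ 2 := fun x => by
    rw [show (2:ℝ) = ((2:ℕ):ℝ) by norm_num, Real.rpow_natCast]
  simp_rw [e2] at h
  calc ∫ ω, F ω * G ω ∂μ ≤ (∫ a, F a ^ 2 ∂μ) ^ (1/2:ℝ) * (∫ a, G a ^ 2 ∂μ) ^ (1/2:ℝ) := h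
    _ = _ := by rw [← Real.sqrt_eq_rpow, ← Real.sqrt_eq_rpow]

lemma sqrt_prod' {s : Finset ℕ} {v : ℕ → ℝ} (hv : ∀ i ∈ s, 0 ≤ v i) :
    Real.sqrt (∏ i ∈ s, v i) = ∏ i ∈ s, Real.sqrt (v i) := by
  induction s using Finset.cons_induction with
  | empty => simp
  | cons a s ha ih =>
    rw [Finset.prod_cons, Finset.prod_cons, Real.sqrt_mul (hv a (Finset.mem_cons_self a s)),
      ih fun i hi => hv i (Finset.mem_cons_of_mem hi)]


lemma indep_prod (hX : ∀ i, Measurable (X i)) (hdep : OneDependent μ n X)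
    (S : Finset ℕ) :
    (∀ i ∈ S, 1 ≤ i ∧ i ≤ n) → (∀ i ∈ S, ∀ j ∈ S, i < j → i + 2 ≤ j) →
    ∫ ω, ∏ i ∈ S, (X i ω : ℝ) ∂μ = ∏ i ∈ S, ∫ ω, (X i ω : ℝ) ∂μ := by
  have key : ∀ (r s i : ℕ), i ∈ Finset.Icc r s →
      @Measurable Ω ℝ (⨆ i ∈ Finset.Icc r s, MeasurableSpace.comap (X i) ⊤) _
        (fun ω => (X i ω : ℝ)) := by
    intro r s i hi
    have h1 : @Measurable Ω ℕ (⨆ i ∈ Finset.Icc r s, MeasurableSpace.comap (X i) ⊤) ⊤ (X i) := by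
      rw [measurable_iff_comap_le]
      exact le_iSup₂ (f := fun i (_ : i ∈ Finset.Icc r s) => MeasurableSpace.comap (X i) ⊤) i hi
    exact Measurable.comp measurable_from_top h1
  induction S using Finset.strongInductionOn with
  | _ S ih =>
    intro hsub hgap
    rcases S.eq_empty_or_nonempty with rfl | hS
    · simp
    set m := S.min' hS with hm
    have hmS : m ∈ S := S.min'_mem hS
    have h1m : 1 ≤ m := (hsub m hmS).1
    rcases (S.erase m).eq_empty_or_nonempty with he | ⟨j, hj⟩
    · rcases (Finset.erase_eq_empty_iff S m).mp he with h | h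
      · simp [h]
      · simp [h]
    · have hjS : j ∈ S := Finset.mem_of_mem_erase hj
      have hmj : m < j := lt_of_le_of_ne (S.min'_le j hjS) (Ne.symm (Finset.ne_of_mem_erase hj))
      have hm2n : m + 2 ≤ n := le_trans (hgap m hmS j hjS hmj) (hsub j hjS).2
      have hind := hdep m h1m hm2n
      have hfM : @Measurable Ω ℝ (⨆ i ∈ Finset.Icc 1 m, MeasurableSpace.comap (X i) ⊤) _
          (fun ω => (X m ω : ℝ)) := key 1 m m (by simp [h1m])
      have hgM : @Measurable Ω ℝ (⨆ i ∈ Finset.Icc (m+2) n, MeasurableSpace.comap (X i) ⊤) _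
          (fun ω => ∏ i ∈ S.erase m, (X i ω : ℝ)) := by
        apply Finset.measurable_prod
        intro i hi
        have hiS : i ∈ S := Finset.mem_of_mem_erase hi
        have hlt : m < i := lt_of_le_of_ne (S.min'_le i hiS) (Ne.symm (Finset.ne_of_mem_erase hi))
        exact key (m+2) n i (Finset.mem_Icc.mpr ⟨hgap m hmS i hiS hlt, (hsub i hiS).2⟩)
      have hIF : IndepFun (fun ω => (X m ω : ℝ)) (fun ω => ∏ i ∈ S.erase m, (X i ω : ℝ)) μ := by
        rw [IndepFun_iff_Indep]
        exact indep_of_indep_of_le_right (indep_of_indep_of_le_left hind hfM.comap_le) hgM.comap_le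
      have hmul := hIF.integral_fun_mul_eq_mul_integral
        ((Measurable.comp measurable_from_top (hX m)).aestronglyMeasurable)
        ((Finset.measurable_prod _ fun i _ =>
          Measurable.comp measurable_from_top (hX i)).aestronglyMeasurable)
      have hrec := ih (S.erase m) (Finset.erase_ssubset hmS)
        (fun i hi => hsub i (Finset.mem_of_mem_erase hi))
        (fun i hi j' hj' hij => hgap i (Finset.mem_of_mem_erase hi) j' (Finset.mem_of_mem_erase hj') hij)
      calc ∫ ω, ∏ i ∈ S, (X i ω : ℝ) ∂μ
          = ∫ ω, (X m ω : ℝ) * ∏ i ∈ S.erase m, (X i ω : ℝ) ∂μ := by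
            congr 1; ext ω
            exact (Finset.mul_prod_erase S (fun i => ((X i ω : ℝ))) hmS).symm
        _ = (∫ ω, (X m ω : ℝ) ∂μ) * ∫ ω, ∏ i ∈ S.erase m, (X i ω : ℝ) ∂μ := hmul
        _ = (∫ ω, (X m ω : ℝ) ∂μ) * ∏ i ∈ S.erase m, ∫ ω, (X i ω : ℝ) ∂μ := by rw [hrec]
        _ = ∏ i ∈ S, ∫ ω, (X i ω : ℝ) ∂μ :=
            Finset.mul_prod_erase S (fun i => ∫ ω, (X i ω : ℝ) ∂μ) hmS

lemma integral_prod_sqrt_le (hC0 : 1 ≤ C0)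
    (hae : ∀ᵐ ω ∂μ, ∀ i ∈ Finset.Icc 1 n, (X i ω : ℝ) ≤ C0)
    (hX : ∀ i, Measurable (X i))
    (hdep : OneDependent μ n X)
    {l k : ℕ} (hl : 1 ≤ l) (hk : k ≤ n) :
    ∫ ω, ∏ i ∈ Finset.Icc l k, Real.sqrt (X i ω) ∂μ
      ≤ ∏ i ∈ Finset.Icc l k, Real.sqrt (∫ ω, (X i ω : ℝ) ∂μ) := by
  classical
  set S := Finset.Icc l k with hSdef
  have hSsub : ∀ i ∈ S, 1 ≤ i ∧ i ≤ n := fun i hi => by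
    rcases Finset.mem_Icc.mp hi with ⟨h1, h2⟩
    exact ⟨le_trans hl h1, le_trans h2 hk⟩
  set S₁ := S.filter (fun i => Even i) with hS1
  set S₂ := S.filter (fun i => ¬ Even i) with hS2
  have hmeas : ∀ (T : Finset ℕ), Measurable (fun ω => ∏ i ∈ T, Real.sqrt (X i ω)) :=
    fun T => Finset.measurable_prod _ fun i _ =>
      Real.continuous_sqrt.measurable.comp (Measurable.comp measurable_from_top (hX i))
  have hnonneg : ∀ (T : Finset ℕ) (ω : Ω), 0 ≤ ∏ i ∈ T, Real.sqrt (X i ω) :=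
    fun T ω => Finset.prod_nonneg fun i _ => Real.sqrt_nonneg _
  have hbdT : ∀ (T : Finset ℕ), T ⊆ S → ∀ᵐ ω ∂μ, (∏ i ∈ T, Real.sqrt (X i ω))
      ≤ Real.sqrt C0 ^ T.card := by
    intro T hT
    filter_upwards [hae] with ω hω
    calc ∏ i ∈ T, Real.sqrt (X i ω) ≤ ∏ i ∈ T, Real.sqrt C0 := by
          apply Finset.prod_le_prod (fun i _ => Real.sqrt_nonneg _)
          intro i hi
          have hiS := hSsub i (hT hi)
          exact Real.sqrt_le_sqrt (hω i (Finset.mem_Icc.mpr hiS))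
      _ = Real.sqrt C0 ^ T.card := Finset.prod_const _
  have hIT : ∀ (T : Finset ℕ), T ⊆ S → (∀ i ∈ T, ∀ j ∈ T, i < j → i + 2 ≤ j) →
      ∫ ω, (∏ i ∈ T, Real.sqrt (X i ω)) ^ 2 ∂μ = ∏ i ∈ T, ∫ ω, (X i ω : ℝ) ∂μ := by
    intro T hT hgapT
    rw [← indep_prod hX hdep T (fun i hi => hSsub i (hT hi)) hgapT]
    apply integral_congr_ae
    filter_upwards with ω
    rw [← Finset.prod_pow]
    exact Finset.prod_congr rfl fun i _ => Real.sq_sqrt (Nat.cast_nonneg _)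
  have hgap1 : ∀ i ∈ S₁, ∀ j ∈ S₁, i < j → i + 2 ≤ j := by
    intro i hi j hj hij
    have h1 := (Finset.mem_filter.mp hi).2
    have h2 := (Finset.mem_filter.mp hj).2
    rw [Nat.even_iff] at h1 h2
    omega
  have hgap2 : ∀ i ∈ S₂, ∀ j ∈ S₂, i < j → i + 2 ≤ j := by
    intro i hi j hj hij
    have h1 := (Finset.mem_filter.mp hi).2
    have h2 := (Finset.mem_filter.mp hj).2
    rw [Nat.even_iff] at h1 h2
    omega
  have hν : ∀ i, 0 ≤ ∫ ω, (X i ω : ℝ) ∂μ := fun i =>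
    integral_nonneg fun ω => Nat.cast_nonneg _
  have key : ∫ ω, (∏ i ∈ S₁, Real.sqrt (X i ω)) * (∏ i ∈ S₂, Real.sqrt (X i ω)) ∂μ
      ≤ (∏ i ∈ S₁, Real.sqrt (∫ ω, (X i ω : ℝ) ∂μ)) *
        (∏ i ∈ S₂, Real.sqrt (∫ ω, (X i ω : ℝ) ∂μ)) := by
    calc ∫ ω, (∏ i ∈ S₁, Real.sqrt (X i ω)) * (∏ i ∈ S₂, Real.sqrt (X i ω)) ∂μ
        ≤ Real.sqrt (∫ ω, (∏ i ∈ S₁, Real.sqrt (X i ω)) ^ 2 ∂μ) *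
          Real.sqrt (∫ ω, (∏ i ∈ S₂, Real.sqrt (X i ω)) ^ 2 ∂μ) :=
          my_cs (hmeas S₁) (hmeas S₂) (hnonneg S₁) (hnonneg S₂)
            (hbdT S₁ (Finset.filter_subset _ _)) (hbdT S₂ (Finset.filter_subset _ _))
      _ = Real.sqrt (∏ i ∈ S₁, ∫ ω, (X i ω : ℝ) ∂μ) *
          Real.sqrt (∏ i ∈ S₂, ∫ ω, (X i ω : ℝ) ∂μ) := by
          rw [hIT S₁ (Finset.filter_subset _ _) hgap1, hIT S₂ (Finset.filter_subset _ _) hgap2]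
      _ = _ := by
          rw [sqrt_prod' (fun i _ => hν i), sqrt_prod' (fun i _ => hν i)]
  calc ∫ ω, ∏ i ∈ S, Real.sqrt (X i ω) ∂μ
      = ∫ ω, (∏ i ∈ S₁, Real.sqrt (X i ω)) * (∏ i ∈ S₂, Real.sqrt (X i ω)) ∂μ := by
        apply integral_congr_ae
        filter_upwards with ω
        exact (Finset.prod_filter_mul_prod_filter_not S _ _).symm
    _ ≤ (∏ i ∈ S₁, Real.sqrt (∫ ω, (X i ω : ℝ) ∂μ)) *
        (∏ i ∈ S₂, Real.sqrt (∫ ω, (X i ω : ℝ) ∂μ)) := key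
    _ = ∏ i ∈ S, Real.sqrt (∫ ω, (X i ω : ℝ) ∂μ) :=
        Finset.prod_filter_mul_prod_filter_not S _ _

lemma Y_abs_le {C0 h t : ℝ} (hC0 : 1 ≤ C0) (hh : 0 ≤ h) {u : ℂ}
    (hu : u = t * Complex.I + h) {x : ℕ} (hx : (x : ℝ) ≤ C0) :
    ‖Complex.exp (u * x) - 1‖ ≤ (Real.exp (h * C0) * (2 + h) * Real.sqrt C0) * Real.sqrt x := by
  rcases Nat.eq_zero_or_pos x with rfl | hx1
  · simp only [Nat.cast_zero, mul_zero, Complex.exp_zero, sub_self, norm_zero]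
    positivity
  · have hx1' : (1:ℝ) ≤ (x:ℝ) := by exact_mod_cast hx1
    have hdecomp : Complex.exp (u * x) - 1
        = Complex.exp (((t * x : ℝ) : ℂ) * Complex.I) * (Complex.exp ((h * x : ℝ) : ℂ) - 1)
          + (Complex.exp (((t * x : ℝ) : ℂ) * Complex.I) - 1) := by
      have : u * x = ((t * x : ℝ) : ℂ) * Complex.I + ((h * x : ℝ) : ℂ) := by
        rw [hu]; push_cast; ring
      rw [this, Complex.exp_add]; ring
    have habs1 : ‖Complex.exp (((t * x : ℝ) : ℂ) * Complex.I)‖ = 1 := by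
      exact Complex.norm_exp_ofReal_mul_I _
    have habs2 : ‖Complex.exp ((h * x : ℝ) : ℂ) - 1‖ = Real.exp (h * x) - 1 := by
      rw [← Complex.ofReal_exp, ← Complex.ofReal_one, ← Complex.ofReal_sub, Complex.norm_real,
        Real.norm_eq_abs, abs_of_nonneg]
      have := Real.one_le_exp (by positivity : (0:ℝ) ≤ h * x)
      linarith
    have hstep1 : ‖Complex.exp (u * x) - 1‖ ≤ (Real.exp (h * x) - 1) + 2 := by
      rw [hdecomp]
      calc ‖_ + _‖ ≤ ‖Complex.exp (((t * x : ℝ) : ℂ) * Complex.I) * (Complex.exp ((h * x : ℝ) : ℂ) - 1)‖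
            + ‖Complex.exp (((t * x : ℝ) : ℂ) * Complex.I) - 1‖ := norm_add_le _ _
        _ ≤ (Real.exp (h * x) - 1) + 2 := by
            rw [norm_mul, habs1, habs2, one_mul]
            have : ‖Complex.exp (((t * x : ℝ) : ℂ) * Complex.I) - 1‖
                ≤ ‖Complex.exp (((t * x : ℝ) : ℂ) * Complex.I)‖ + ‖(1:ℂ)‖ := norm_sub_le _ _
            rw [habs1, norm_one] at this
            linarith
    -- real estimates
    have hEC : (1:ℝ) ≤ Real.exp (h * C0) := Real.one_le_exp (by positivity)
    have hexple : Real.exp (h * x) ≤ Real.exp (h * C0) :=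
      Real.exp_le_exp.mpr (by nlinarith)
    have hf1 : Real.exp (h * x) - 1 ≤ h * x * Real.exp (h * C0) := by
      have h1 := Real.add_one_le_exp (-(h * x))
      have h2 : Real.exp (-(h * x)) = (Real.exp (h * x))⁻¹ := Real.exp_neg _
      have h3 := Real.exp_pos (h * x)
      have h4 : Real.exp (h * x) - 1 ≤ h * x * Real.exp (h * x) := by
        rw [h2] at h1
        have h5 : (1 - h * x) * Real.exp (h * x) ≤ 1 := by
          have := mul_le_mul_of_nonneg_right h1 h3.le
          rw [inv_mul_cancel₀ h3.ne'] at this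
          nlinarith
        nlinarith
      nlinarith [mul_le_mul_of_nonneg_left hexple (by positivity : (0:ℝ) ≤ h * x)]
    have hsq : Real.sqrt x * Real.sqrt x = (x : ℝ) := Real.mul_self_sqrt (Nat.cast_nonneg _)
    have hsqle : Real.sqrt x ≤ Real.sqrt C0 := Real.sqrt_le_sqrt hx
    have hsq0 : (0:ℝ) ≤ Real.sqrt x := Real.sqrt_nonneg _
    have hsqC0 : (0:ℝ) ≤ Real.sqrt C0 := Real.sqrt_nonneg _
    have hxle : (x : ℝ) ≤ Real.sqrt C0 * Real.sqrt x := by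
      nlinarith [mul_le_mul_of_nonneg_right hsqle hsq0]
    -- combine
    have hmain : (Real.exp (h * x) - 1) + 2
        ≤ (Real.exp (h * C0) * (2 + h) * Real.sqrt C0) * Real.sqrt x := by
      have hkey : h * x * Real.exp (h * C0) + 2 ≤ Real.exp (h * C0) * (2 + h) * x := by
        nlinarith
      have hkey2 : Real.exp (h * C0) * (2 + h) * x
          ≤ Real.exp (h * C0) * (2 + h) * (Real.sqrt C0 * Real.sqrt x) := by
        apply mul_le_mul_of_nonneg_left hxle (by positivity)
      calc (Real.exp (h * x) - 1) + 2 ≤ h * x * Real.exp (h * C0) + 2 := by linarith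
        _ ≤ Real.exp (h * C0) * (2 + h) * x := hkey
        _ ≤ Real.exp (h * C0) * (2 + h) * (Real.sqrt C0 * Real.sqrt x) := hkey2
        _ = (Real.exp (h * C0) * (2 + h) * Real.sqrt C0) * Real.sqrt x := by ring
    linarith

lemma prodY {a : ℝ} (hC0 : 1 ≤ C0) (hh : 0 ≤ h) (hu : u = t * Complex.I + h)
    (ha : a = Real.exp (h * C0) * (2 + h) * Real.sqrt C0)
    (hae : ∀ᵐ ω ∂μ, ∀ i ∈ Finset.Icc 1 n, (X i ω : ℝ) ≤ C0)
    (hX : ∀ i, Measurable (X i))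
    (hdep : OneDependent μ n X)
    {l k : ℕ} (hl : 1 ≤ l) (hk : k ≤ n) :
    ‖∫ ω, ∏ i ∈ Finset.Icc l k, (Complex.exp (u * (X i ω : ℂ)) - 1) ∂μ‖
      ≤ ∏ i ∈ Finset.Icc l k, (a * Real.sqrt (∫ ω, (X i ω : ℝ) ∂μ)) := by
  have ha0 : 0 ≤ a := by rw [ha]; positivity
  have hmemIcc : ∀ i ∈ Finset.Icc l k, i ∈ Finset.Icc 1 n := by
    intro i hi
    rcases Finset.mem_Icc.mp hi with ⟨h1, h2⟩
    exact Finset.mem_Icc.mpr ⟨le_trans hl h1, le_trans h2 hk⟩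
  have hmajmeas : Measurable (fun ω => ∏ i ∈ Finset.Icc l k, (a * Real.sqrt (X i ω))) :=
    Finset.measurable_prod _ fun i _ => (measurable_const.mul
      (Real.continuous_sqrt.measurable.comp (Measurable.comp measurable_from_top (hX i))))
  have hmajint : Integrable (fun ω => ∏ i ∈ Finset.Icc l k, (a * Real.sqrt (X i ω))) μ := by
    apply Integrable.mono' (integrable_const ((a * Real.sqrt C0) ^ (Finset.Icc l k).card))
      hmajmeas.aestronglyMeasurable
    filter_upwards [hae] with ω hω
    rw [Real.norm_eq_abs, abs_of_nonneg (Finset.prod_nonneg fun i _ => by positivity)]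
    calc ∏ i ∈ Finset.Icc l k, (a * Real.sqrt (X i ω))
        ≤ ∏ i ∈ Finset.Icc l k, (a * Real.sqrt C0) := by
          apply Finset.prod_le_prod (fun i _ => by positivity)
          intro i hi
          exact mul_le_mul_of_nonneg_left (Real.sqrt_le_sqrt (hω i (hmemIcc i hi))) ha0
      _ = (a * Real.sqrt C0) ^ (Finset.Icc l k).card := Finset.prod_const _
  calc ‖∫ ω, ∏ i ∈ Finset.Icc l k, (Complex.exp (u * (X i ω : ℂ)) - 1) ∂μ‖
      ≤ ∫ ω, ‖∏ i ∈ Finset.Icc l k, (Complex.exp (u * (X i ω : ℂ)) - 1)‖ ∂μ :=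
        norm_integral_le_integral_norm _
    _ ≤ ∫ ω, ∏ i ∈ Finset.Icc l k, (a * Real.sqrt (X i ω)) ∂μ := by
        apply integral_mono_of_nonneg (ae_of_all _ fun ω => norm_nonneg _) hmajint
        filter_upwards [hae] with ω hω
        rw [norm_prod]
        apply Finset.prod_le_prod (fun i _ => norm_nonneg _)
        intro i hi
        rw [ha]
        exact Y_abs_le hC0 hh hu (hω i (hmemIcc i hi))
    _ = a ^ (Finset.Icc l k).card * ∫ ω, ∏ i ∈ Finset.Icc l k, Real.sqrt (X i ω) ∂μ := by
        simp_rw [Finset.prod_mul_distrib, Finset.prod_const]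
        rw [integral_const_mul]
    _ ≤ a ^ (Finset.Icc l k).card * ∏ i ∈ Finset.Icc l k, Real.sqrt (∫ ω, (X i ω : ℝ) ∂μ) :=
        mul_le_mul_of_nonneg_left (integral_prod_sqrt_le hC0 hae hX hdep hl hk) (pow_nonneg ha0 _)
    _ = ∏ i ∈ Finset.Icc l k, (a * Real.sqrt (∫ ω, (X i ω : ℝ) ∂μ)) := by
        rw [Finset.prod_mul_distrib, Finset.prod_const]

end HeinrichAux

lemma psi_bound {Ω : Type*} [MeasurableSpace Ω] (μ : Measure Ω) (U : ℕ → Ω → ℂ)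
    (b : ℕ → ℝ) (hb0 : ∀ i, 0 ≤ b i) (n : ℕ)
    (hprod : ∀ l k, 1 ≤ l → k ≤ n →
      ‖∫ ω, ∏ i ∈ Finset.Icc l k, U i ω ∂μ‖ ≤ ∏ i ∈ Finset.Icc l k, b i) :
    ∀ k, k ≤ n → ∀ j, 1 ≤ j → j ≤ k →
      ‖heinrichE μ U j k‖ ≤ 2 ^ (k - j) * ∏ i ∈ Finset.Icc j k, b i := by
  intro k
  induction k using Nat.strong_induction_on with
  | _ k ih =>
    intro hkn j hj1 hjk
    have hG0 : ∀ l k', (0:ℝ) ≤ ∏ i ∈ Finset.Icc l k', b i :=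
      fun l k' => Finset.prod_nonneg fun i _ => hb0 i
    have hGsplit : ∀ l ∈ Finset.Ico j k,
        (∏ i ∈ Finset.Icc j l, b i) * ∏ i ∈ Finset.Icc (l+1) k, b i
          = ∏ i ∈ Finset.Icc j k, b i := by
      intro l hl
      obtain ⟨hjl, hlk⟩ := Finset.mem_Ico.mp hl
      rw [← Finset.Ico_add_one_right_eq_Icc j l, ← Finset.Ico_add_one_right_eq_Icc (l+1) k, ← Finset.Ico_add_one_right_eq_Icc j k]
      exact Finset.prod_Ico_consecutive _ (le_trans hjl (Nat.le_succ l)) (Nat.succ_le_succ hlk.le)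
    rw [heinrichE]
    calc ‖(∫ ω, ∏ i ∈ Finset.Icc j k, U i ω ∂μ)
          - ∑ l ∈ (Finset.Ico j k).attach,
              heinrichE μ U j l.1 * ∫ ω, ∏ i ∈ Finset.Icc (l.1 + 1) k, U i ω ∂μ‖
        ≤ ‖∫ ω, ∏ i ∈ Finset.Icc j k, U i ω ∂μ‖
          + ‖∑ l ∈ (Finset.Ico j k).attach,
              heinrichE μ U j l.1 * ∫ ω, ∏ i ∈ Finset.Icc (l.1 + 1) k, U i ω ∂μ‖ :=
          norm_sub_le _ _
      _ ≤ (∏ i ∈ Finset.Icc j k, b i)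
          + ∑ l ∈ Finset.Ico j k,
              2 ^ (l - j) * ((∏ i ∈ Finset.Icc j l, b i) * ∏ i ∈ Finset.Icc (l+1) k, b i) := by
          apply add_le_add (hprod j k hj1 hkn)
          calc ‖∑ l ∈ (Finset.Ico j k).attach,
                heinrichE μ U j l.1 * ∫ ω, ∏ i ∈ Finset.Icc (l.1 + 1) k, U i ω ∂μ‖
              ≤ ∑ l ∈ (Finset.Ico j k).attach,
                ‖heinrichE μ U j l.1 * ∫ ω, ∏ i ∈ Finset.Icc (l.1 + 1) k, U i ω ∂μ‖ :=
                norm_sum_le _ _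
            _ ≤ ∑ l ∈ (Finset.Ico j k).attach,
                2 ^ (l.1 - j) * ((∏ i ∈ Finset.Icc j l.1, b i) * ∏ i ∈ Finset.Icc (l.1+1) k, b i) := by
                apply Finset.sum_le_sum
                intro l _
                obtain ⟨hjl, hlk⟩ := Finset.mem_Ico.mp l.2
                rw [norm_mul]
                have h1 : ‖heinrichE μ U j l.1‖ ≤ 2 ^ (l.1 - j) * ∏ i ∈ Finset.Icc j l.1, b i :=
                  ih l.1 hlk (le_trans hlk.le hkn) j hj1 hjl
                have h2 : ‖∫ ω, ∏ i ∈ Finset.Icc (l.1 + 1) k, U i ω ∂μ‖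
                    ≤ ∏ i ∈ Finset.Icc (l.1+1) k, b i :=
                  hprod (l.1+1) k (Nat.le_add_left 1 l.1) hkn
                calc ‖heinrichE μ U j l.1‖ * ‖∫ ω, ∏ i ∈ Finset.Icc (l.1 + 1) k, U i ω ∂μ‖
                    ≤ (2 ^ (l.1 - j) * ∏ i ∈ Finset.Icc j l.1, b i) *
                      (∏ i ∈ Finset.Icc (l.1+1) k, b i) :=
                      mul_le_mul h1 h2 (norm_nonneg _) (mul_nonneg (by positivity) (Finset.prod_nonneg fun i _ => hb0 i))
                  _ = 2 ^ (l.1 - j) * ((∏ i ∈ Finset.Icc j l.1, b i) *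
                      ∏ i ∈ Finset.Icc (l.1+1) k, b i) := by ring
            _ = ∑ l ∈ Finset.Ico j k,
                2 ^ (l - j) * ((∏ i ∈ Finset.Icc j l, b i) * ∏ i ∈ Finset.Icc (l+1) k, b i) :=
                Finset.sum_attach (Finset.Ico j k)
                  (fun l => 2 ^ (l - j) * ((∏ i ∈ Finset.Icc j l, b i) * ∏ i ∈ Finset.Icc (l+1) k, b i))
      _ = (∏ i ∈ Finset.Icc j k, b i) + (2 ^ (k - j) - 1) * ∏ i ∈ Finset.Icc j k, b i := by
          congr 1
          rw [Finset.sum_congr rfl fun l hl => by rw [hGsplit l hl]]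
          rw [← Finset.sum_mul]
          congr 1
          rw [Finset.sum_Ico_eq_sum_range]
          simp_rw [Nat.add_sub_cancel_left]
          rw [geom_sum_eq (by norm_num : (2:ℝ) ≠ 1)]
          norm_num
      _ = 2 ^ (k - j) * ∏ i ∈ Finset.Icc j k, b i := by ring

/-- Lemma 3 (first estimate): bound on `|Ψ_{jk}|` for `1 ≤ j ≤ k - 3`. -/
theorem heinrichE_bound_far (C0 h t : ℝ) (hC0 : 1 ≤ C0) (hh : 0 ≤ h)
    (u : ℂ) (hu : u = t * Complex.I + h)
    (Ω : Type*) [MeasurableSpace Ω] (μ : Measure Ω) [IsProbabilityMeasure μ]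
    (n : ℕ) (X : ℕ → Ω → ℕ) (hX : ∀ i, Measurable (X i))
    (hbd : ∀ i, 1 ≤ i → i ≤ n → ∀ᵐ ω ∂μ, ((X i ω : ℝ)) ≤ C0)
    (hdep : OneDependent μ n X)
    (a : ℝ) (ha : a = Real.exp (h * C0) * (2 + h) * Real.sqrt C0)
    (hsmall : ∀ j ∈ Finset.Icc 1 n, a ^ 2 * facMoment μ (X j) 1 ≤ 1 / 100) :
    ∀ k, 4 ≤ k → k ≤ n → ∀ j, 1 ≤ j → j ≤ k - 3 →
      ‖heinrichE μ (fun i ω => Complex.exp (u * (X i ω : ℂ)) - 1) j k‖ ≤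
        250 * a ^ 4 * (1 / 5) ^ (k - j) *
          ∑ l ∈ Finset.range 4, (facMoment μ (X (k - l)) 1) ^ 2 := by
  classical
  set ν : ℕ → ℝ := fun i => ∫ ω, (X i ω : ℝ) ∂μ with hνdef
  set b : ℕ → ℝ := fun i => a * Real.sqrt (ν i) with hbdef
  have ha0 : 0 ≤ a := by rw [ha]; positivity
  have hν0 : ∀ i, 0 ≤ ν i := fun i => integral_nonneg fun ω => Nat.cast_nonneg _
  have hb0 : ∀ i, 0 ≤ b i := fun i => mul_nonneg ha0 (Real.sqrt_nonneg _)
  have hfac : ∀ i, facMoment μ (X i) 1 = ν i := fun i => by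
    simp [facMoment, Nat.descFactorial, hνdef]
  have hae : ∀ᵐ ω ∂μ, ∀ i ∈ Finset.Icc 1 n, (X i ω : ℝ) ≤ C0 :=
    (Finset.Icc 1 n).eventually_all.mpr fun i hi =>
      hbd i (Finset.mem_Icc.mp hi).1 (Finset.mem_Icc.mp hi).2
  have hble : ∀ i, 1 ≤ i → i ≤ n → b i ≤ 1 / 10 := by
    intro i h1 h2
    have hs := hsmall i (Finset.mem_Icc.mpr ⟨h1, h2⟩)
    rw [hfac] at hs
    have hsq : Real.sqrt (ν i) ^ 2 = ν i := Real.sq_sqrt (hν0 i)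
    have hbsq : b i ^ 2 ≤ 1 / 100 := by
      have : b i ^ 2 = a ^ 2 * ν i := by rw [hbdef]; simp only []; rw [mul_pow, hsq]
      rw [this]; exact hs
    nlinarith [hb0 i, sq_nonneg (b i - 1 / 10)]
  have hprod : ∀ l k, 1 ≤ l → k ≤ n →
      ‖∫ ω, ∏ i ∈ Finset.Icc l k,
        (fun i ω => Complex.exp (u * (X i ω : ℂ)) - 1) i ω ∂μ‖ ≤ ∏ i ∈ Finset.Icc l k, b i :=
    fun l k hl hk => prodY hC0 hh hu ha hae hX hdep hl hk
  have hpsi := psi_bound μ (fun i ω => Complex.exp (u * (X i ω : ℂ)) - 1) b hb0 n hprod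
  intro k hk4 hkn j hj1 hjk3
  obtain ⟨m, rfl⟩ : ∃ m, k = m + 4 := ⟨k - 4, by omega⟩
  have hjm : j ≤ m + 1 := by omega
  -- split the product
  have hsplit : ∏ i ∈ Finset.Icc j (m + 4), b i
      = (∏ i ∈ Finset.Ico j (m + 1), b i) * ∏ i ∈ Finset.Icc (m + 1) (m + 4), b i := by
    rw [← Finset.Ico_add_one_right_eq_Icc j (m + 4), ← Finset.Ico_add_one_right_eq_Icc (m + 1) (m + 4)]
    exact (Finset.prod_Ico_consecutive _ hjm (by omega)).symm
  have hIcoLe : ∏ i ∈ Finset.Ico j (m + 1), b i ≤ (1 / 10 : ℝ) ^ (m + 1 - j) := by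
    calc ∏ i ∈ Finset.Ico j (m + 1), b i ≤ ∏ i ∈ Finset.Ico j (m + 1), (1 / 10 : ℝ) := by
          apply Finset.prod_le_prod (fun i _ => hb0 i)
          intro i hi
          obtain ⟨h1, h2⟩ := Finset.mem_Ico.mp hi
          exact hble i (le_trans hj1 h1) (by omega)
      _ = (1 / 10 : ℝ) ^ (m + 1 - j) := by rw [Finset.prod_const, Nat.card_Ico]
  have hfourset : Finset.Icc (m + 1) (m + 4)
      = insert (m + 1) (insert (m + 2) (insert (m + 3) {m + 4})) := by
    ext x
    simp only [Finset.mem_Icc, Finset.mem_insert, Finset.mem_singleton]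
    omega
  have hfourprod : ∏ i ∈ Finset.Icc (m + 1) (m + 4), b i
      = b (m + 1) * (b (m + 2) * (b (m + 3) * b (m + 4))) := by
    rw [hfourset, Finset.prod_insert (by simp only [Finset.mem_insert, Finset.mem_singleton, not_or]; omega), Finset.prod_insert (by simp only [Finset.mem_insert, Finset.mem_singleton, not_or]; omega),
      Finset.prod_insert (by simp only [Finset.mem_insert, Finset.mem_singleton, not_or]; omega), Finset.prod_singleton]
  -- AM-GM on the last four factors
  set S4 : ℝ := ν (m + 1) ^ 2 + ν (m + 2) ^ 2 + ν (m + 3) ^ 2 + ν (m + 4) ^ 2 with hS4def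
  have hgm4 : ∀ s1 s2 s3 s4 : ℝ, 0 ≤ s1 → 0 ≤ s2 → 0 ≤ s3 → 0 ≤ s4 →
      s1 * s2 * s3 * s4 ≤ ((s1^2)^2 + (s2^2)^2 + (s3^2)^2 + (s4^2)^2) / 4 := by
    intro s1 s2 s3 s4 h1 h2 h3 h4
    nlinarith [sq_nonneg (s1*s2 - s3*s4), sq_nonneg (s1^2 - s2^2), sq_nonneg (s3^2 - s4^2),
      mul_nonneg h1 h2, mul_nonneg h3 h4]
  have hfourle : ∏ i ∈ Finset.Icc (m + 1) (m + 4), b i ≤ a ^ 4 * S4 / 4 := by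
    rw [hfourprod]
    have hs1 : Real.sqrt (ν (m + 1)) ^ 2 = ν (m + 1) := Real.sq_sqrt (hν0 _)
    have hs2 : Real.sqrt (ν (m + 2)) ^ 2 = ν (m + 2) := Real.sq_sqrt (hν0 _)
    have hs3 : Real.sqrt (ν (m + 3)) ^ 2 = ν (m + 3) := Real.sq_sqrt (hν0 _)
    have hs4 : Real.sqrt (ν (m + 4)) ^ 2 = ν (m + 4) := Real.sq_sqrt (hν0 _)
    have hgm := hgm4 (Real.sqrt (ν (m + 1))) (Real.sqrt (ν (m + 2)))
      (Real.sqrt (ν (m + 3))) (Real.sqrt (ν (m + 4)))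
      (Real.sqrt_nonneg _) (Real.sqrt_nonneg _) (Real.sqrt_nonneg _) (Real.sqrt_nonneg _)
    rw [hs1, hs2, hs3, hs4] at hgm
    have ha4 : (0:ℝ) ≤ a ^ 4 := by positivity
    calc b (m + 1) * (b (m + 2) * (b (m + 3) * b (m + 4)))
        = a ^ 4 * (Real.sqrt (ν (m + 1)) * Real.sqrt (ν (m + 2)) *
          Real.sqrt (ν (m + 3)) * Real.sqrt (ν (m + 4))) := by rw [hbdef]; ring
      _ ≤ a ^ 4 * (S4 / 4) := mul_le_mul_of_nonneg_left hgm ha4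
      _ = a ^ 4 * S4 / 4 := by ring
  have hsum : ∑ l ∈ Finset.range 4, (facMoment μ (X (m + 4 - l)) 1) ^ 2 = S4 := by
    rw [Finset.sum_range_succ, Finset.sum_range_succ, Finset.sum_range_succ,
      Finset.sum_range_one]
    have e0 : m + 4 - 0 = m + 4 := by omega
    have e1 : m + 4 - 1 = m + 3 := by omega
    have e2 : m + 4 - 2 = m + 2 := by omega
    have e3 : m + 4 - 3 = m + 1 := by omega
    rw [e0, e1, e2, e3, hfac, hfac, hfac, hfac, hS4def]
    ring
  have harith : (2:ℝ) ^ (m + 4 - j) * ((1 / 10 : ℝ) ^ (m + 1 - j) * (a ^ 4 * S4 / 4))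
      = 250 * a ^ 4 * (1 / 5 : ℝ) ^ (m + 4 - j) * S4 := by
    have he : m + 4 - j = (m + 1 - j) + 3 := by omega
    rw [he, show ((1:ℝ)/5) = 2 * (1/10) by norm_num, mul_pow]
    ring
  calc ‖heinrichE μ (fun i ω => Complex.exp (u * (X i ω : ℂ)) - 1) j (m + 4)‖
      = ‖heinrichE μ (fun i ω => Complex.exp (u * (X i ω : ℂ)) - 1) j (m + 4)‖ := rfl
    _ ≤ 2 ^ (m + 4 - j) * ∏ i ∈ Finset.Icc j (m + 4), b i :=
        hpsi (m + 4) hkn j hj1 (by omega)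
    _ = 2 ^ (m + 4 - j) * ((∏ i ∈ Finset.Ico j (m + 1), b i) *
        ∏ i ∈ Finset.Icc (m + 1) (m + 4), b i) := by rw [hsplit]
    _ ≤ 2 ^ (m + 4 - j) * ((1 / 10 : ℝ) ^ (m + 1 - j) * (a ^ 4 * S4 / 4)) := by
        apply mul_le_mul_of_nonneg_left _ (by positivity)
        exact mul_le_mul hIcoLe hfourle
          (Finset.prod_nonneg fun i _ => hb0 i) (by positivity)
    _ = 250 * a ^ 4 * (1 / 5 : ℝ) ^ (m + 4 - j) * S4 := harith
    _ = 250 * a ^ 4 * (1 / 5) ^ (m + 4 - j) *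
        ∑ l ∈ Finset.range 4, (facMoment μ (X (m + 4 - l)) 1) ^ 2 := by rw [hsum]
end

section
/- Let C0 ≥ 1, h ≥ 0, t ∈ ℝ, u = it + h, and let X_1,…,X_n be 1-dependent random variables taking values in the nonnegative integers with X_i ≤ C0 almost surely. Set a = e^{hC0}(2+h)√C0, Γ_1 = Σ_{k=1}^n ν_1(k), and assume a²·max_{1≤j≤n} ν_1(j) ≤ 1/100. Then the series A(u) = Σ_{k=1}^n Σ_{j=1}^∞ (−1)^{j+1}(φ_k(u) − 1)^j / j converges absolutely and |A(u)| ≤ 4a²Γ_1. -/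
open MeasureTheory ProbabilityTheory Filter Finset
open scoped BigOperators

section Helpers

variable {Ω : Type*} [MeasurableSpace Ω] {μ : Measure Ω}

lemma integrable_of_ae_bdd [IsFiniteMeasure μ] {E : Type*} [NormedAddCommGroup E]
    {f : Ω → E} (hf : AEStronglyMeasurable f μ) (C : ℝ) (h : ∀ᵐ ω ∂μ, ‖f ω‖ ≤ C) :
    Integrable f μ :=
  (integrable_const C).mono' hf h

lemma sum_geo_aux {r : ℝ} (h0 : 0 ≤ r) (h1 : r < 1) (M : Finset ℕ) (hM : 0 ∉ M) :
    ∑ m ∈ M, r ^ m ≤ r / (1 - r) := by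
  have hr1 : (0:ℝ) < 1 - r := by linarith
  set N := M.sup id + 1 with hN
  have hsub : M ⊆ (Finset.range N).erase 0 := by
    intro m hm
    rw [Finset.mem_erase, Finset.mem_range]
    exact ⟨fun h => hM (h ▸ hm), Nat.lt_succ_of_le (Finset.le_sup (f := id) hm)⟩
  have hgeom : ∑ m ∈ Finset.range N, r ^ m ≤ 1 / (1 - r) := by
    rw [geom_sum_eq (ne_of_lt h1)]
    rw [show (r ^ N - 1) / (r - 1) = (1 - r ^ N) / (1 - r) by
      rw [← neg_sub r 1, ← neg_sub (r ^ N) 1, neg_div_neg_eq]]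
    have hle : 1 - r ^ N ≤ 1 := by nlinarith [pow_nonneg h0 N]
    exact (div_le_div_iff_of_pos_right hr1).mpr hle
  calc ∑ m ∈ M, r ^ m ≤ ∑ m ∈ (Finset.range N).erase 0, r ^ m :=
        Finset.sum_le_sum_of_subset_of_nonneg hsub (fun i _ _ => pow_nonneg h0 i)
    _ = ∑ m ∈ Finset.range N, r ^ m - 1 := by
        rw [Finset.sum_erase_eq_sub (Finset.mem_range.mpr (Nat.succ_pos _)), pow_zero]
    _ ≤ 1 / (1 - r) - 1 := by linarith
    _ = r / (1 - r) := by field_simp; ring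

/-- geometric tail bound, summing over `k` with exponent `k - j`. -/
lemma sum_geo_shift {r : ℝ} (h0 : 0 ≤ r) (h1 : r < 1) (T : Finset ℕ) (j : ℕ)
    (hT : ∀ k ∈ T, j < k) : ∑ k ∈ T, r ^ (k - j) ≤ r / (1 - r) := by
  rw [show ∑ k ∈ T, r ^ (k - j) = ∑ m ∈ T.image (fun k => k - j), r ^ m from
    (Finset.sum_image (fun x hx y hy hxy => by
      have := hT x hx; have := hT y hy; omega)).symm]
  apply sum_geo_aux h0 h1
  intro h0mem
  obtain ⟨k, hk, hk0⟩ := Finset.mem_image.mp h0mem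
  have := hT k hk; omega

/-- geometric tail bound, summing over `j` with exponent `k - j`. -/
lemma sum_geo_shift' {r : ℝ} (h0 : 0 ≤ r) (h1 : r < 1) (T : Finset ℕ) (k : ℕ)
    (hT : ∀ j ∈ T, j < k) : ∑ j ∈ T, r ^ (k - j) ≤ r / (1 - r) := by
  rw [show ∑ j ∈ T, r ^ (k - j) = ∑ m ∈ T.image (fun j => k - j), r ^ m from
    (Finset.sum_image (fun x hx y hy hxy => by
      have := hT x hx; have := hT y hy; omega)).symm]
  apply sum_geo_aux h0 h1
  intro h0mem
  obtain ⟨j, hj, hj0⟩ := Finset.mem_image.mp h0mem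
  have := hT j hj; omega

/-- Cauchy–Schwarz for the Bochner integral on ℝ. -/
lemma integral_mul_le_sqrt {f g : Ω → ℝ}
    (hf2 : Integrable (fun ω => f ω * f ω) μ) (hg2 : Integrable (fun ω => g ω * g ω) μ)
    (hfg : Integrable (fun ω => f ω * g ω) μ) :
    ∫ ω, f ω * g ω ∂μ ≤
      Real.sqrt (∫ ω, f ω * f ω ∂μ) * Real.sqrt (∫ ω, g ω * g ω ∂μ) := by
  set A := ∫ ω, f ω * f ω ∂μ with hA
  set B := ∫ ω, f ω * g ω ∂μ with hB
  set C := ∫ ω, g ω * g ω ∂μ with hC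
  have hA0 : 0 ≤ A := integral_nonneg fun ω => mul_self_nonneg _
  have hC0 : 0 ≤ C := integral_nonneg fun ω => mul_self_nonneg _
  have hq : ∀ x : ℝ, 0 ≤ A * (x * x) + (2 * B) * x + C := by
    intro x
    have h1 : (fun ω => (x * f ω + g ω) * (x * f ω + g ω))
        = fun ω => x * x * (f ω * f ω) + ((2 * x) * (f ω * g ω) + g ω * g ω) := by
      funext ω; ring
    have h2 : 0 ≤ ∫ ω, (x * f ω + g ω) * (x * f ω + g ω) ∂μ :=
      integral_nonneg fun ω => mul_self_nonneg _
    have i1 : Integrable (fun ω => 2 * x * (f ω * g ω) + g ω * g ω) μ :=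
      (hfg.const_mul _).add hg2
    rw [h1, integral_add (hf2.const_mul _) i1,
      integral_add (hfg.const_mul _) hg2, integral_const_mul, integral_const_mul] at h2
    linarith
  have hdisc := discrim_le_zero hq
  rw [discrim] at hdisc
  have hBAC : B ^ 2 ≤ A * C := by nlinarith
  calc B ≤ |B| := le_abs_self B
    _ = Real.sqrt (B ^ 2) := (Real.sqrt_sq_eq_abs B).symm
    _ ≤ Real.sqrt (A * C) := Real.sqrt_le_sqrt hBAC
    _ = Real.sqrt A * Real.sqrt C := Real.sqrt_mul hA0 C

end Helpers

section Indep

variable {Ω : Type*} [MeasurableSpace Ω] {μ : Measure Ω}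

lemma measurable_X_iSup (X : ℕ → Ω → ℕ) {s : Finset ℕ} {i : ℕ} (hi : i ∈ s) :
    Measurable[⨆ i ∈ s, MeasurableSpace.comap (X i) ⊤] (X i) :=
  measurable_iff_comap_le.mpr
    (le_biSup (f := fun i => MeasurableSpace.comap (X i) ⊤) hi)

lemma oneDep_prod_integral [IsProbabilityMeasure μ] (n : ℕ) (X : ℕ → Ω → ℕ)
    (hX : ∀ i, Measurable (X i)) (hdep : OneDependent μ n X)
    (G : ℕ → ℕ → ℝ) (C : ℕ → ℝ) (hGbd : ∀ i m, |G i m| ≤ C i) :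
    ∀ S : Finset ℕ, (S ⊆ Finset.Icc 1 n) → (∀ i ∈ S, ∀ j ∈ S, i < j → i + 2 ≤ j) →
      ∫ ω, ∏ i ∈ S, G i (X i ω) ∂μ = ∏ i ∈ S, ∫ ω, G i (X i ω) ∂μ := by
  intro S
  induction S using Finset.strongInduction with
  | _ S ih =>
    intro hSn hgap
    rcases S.eq_empty_or_nonempty with rfl | hne
    · simp
    have hint : ∀ i, Integrable (fun ω => G i (X i ω)) μ := by
      intro i
      refine integrable_of_ae_bdd ((measurable_from_top.comp (hX i)).aestronglyMeasurable) (C i)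
        (Filter.Eventually.of_forall fun ω => ?_)
      simpa [Real.norm_eq_abs] using hGbd i (X i ω)
    set M := S.max' hne with hM
    have hMS : M ∈ S := S.max'_mem hne
    have hMn : M ≤ n := (Finset.mem_Icc.mp (hSn hMS)).2
    set S' := S.erase M with hS'
    rcases S'.eq_empty_or_nonempty with h0 | hne'
    · have hsing : S = {M} := by
        rcases (Finset.erase_eq_empty_iff S M).mp h0 with h | h
        · exact absurd h (Finset.nonempty_iff_ne_empty.mp hne)
        · exact h
      simp [hsing]
    · obtain ⟨i0, hi0⟩ := hne'
      have hi0S : i0 ∈ S := Finset.mem_of_mem_erase hi0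
      have hi0M : i0 ≠ M := Finset.ne_of_mem_erase hi0
      have hi0le : i0 ≤ M := S.le_max' i0 hi0S
      have hi01 : 1 ≤ i0 := (Finset.mem_Icc.mp (hSn hi0S)).1
      have hgap0 : i0 + 2 ≤ M := hgap i0 hi0S M hMS (by omega)
      have hM3 : 3 ≤ M := by omega
      have hind := hdep (M - 2) (by omega) (by omega)
      rw [show M - 2 + 2 = M by omega] at hind
      have meas1 : Measurable[⨆ i ∈ Finset.Icc 1 (M - 2), MeasurableSpace.comap (X i) ⊤]
          (fun ω => ∏ i ∈ S', G i (X i ω)) := by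
        refine Finset.measurable_prod _ fun i hi => ?_
        have hiS : i ∈ S := Finset.mem_of_mem_erase hi
        have h1 : 1 ≤ i := (Finset.mem_Icc.mp (hSn hiS)).1
        have h2 : i + 2 ≤ M := hgap i hiS M hMS (by
          have h3 := S.le_max' i hiS
          have h4 := Finset.ne_of_mem_erase hi
          omega)
        exact measurable_from_top.comp
          (measurable_X_iSup X (Finset.mem_Icc.mpr ⟨h1, by omega⟩))
      have meas2 : Measurable[⨆ i ∈ Finset.Icc M n, MeasurableSpace.comap (X i) ⊤]
          (fun ω => G M (X M ω)) :=
        measurable_from_top.comp (measurable_X_iSup X (Finset.mem_Icc.mpr ⟨le_rfl, hMn⟩))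
      have hIF : IndepFun (fun ω => ∏ i ∈ S', G i (X i ω)) (fun ω => G M (X M ω)) μ := by
        rw [IndepFun_iff_Indep]
        exact indep_of_indep_of_le_right
          (indep_of_indep_of_le_left hind (measurable_iff_comap_le.mp meas1))
          (measurable_iff_comap_le.mp meas2)
      have int1 : Integrable (fun ω => ∏ i ∈ S', G i (X i ω)) μ := by
        refine integrable_of_ae_bdd
          ((Finset.measurable_prod _ fun i _ =>
            measurable_from_top.comp (hX i)).aestronglyMeasurable)
          (∏ i ∈ S', max (C i) 0) (Filter.Eventually.of_forall fun ω => ?_)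
        rw [Real.norm_eq_abs, Finset.abs_prod]
        exact Finset.prod_le_prod (fun i _ => abs_nonneg _)
          (fun i _ => le_trans (hGbd i (X i ω)) (le_max_left _ _))
      have key := hIF.integral_mul_eq_mul_integral int1.aestronglyMeasurable (hint M).aestronglyMeasurable
      have hIH := ih S' (Finset.erase_ssubset hMS)
        (fun i hi => hSn (Finset.mem_of_mem_erase hi))
        (fun i hi j hj hij =>
          hgap i (Finset.mem_of_mem_erase hi) j (Finset.mem_of_mem_erase hj) hij)
      calc ∫ ω, ∏ i ∈ S, G i (X i ω) ∂μ
          = ∫ ω, (∏ i ∈ S', G i (X i ω)) * G M (X M ω) ∂μ :=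
            integral_congr_ae (Filter.Eventually.of_forall fun ω =>
              (Finset.prod_erase_mul S _ hMS).symm)
        _ = (∫ ω, ∏ i ∈ S', G i (X i ω) ∂μ) * ∫ ω, G M (X M ω) ∂μ := key
        _ = (∏ i ∈ S', ∫ ω, G i (X i ω) ∂μ) * ∫ ω, G M (X M ω) ∂μ := by rw [hIH]
        _ = ∏ i ∈ S, ∫ ω, G i (X i ω) ∂μ := Finset.prod_erase_mul S _ hMS

end Indep

section Cumulant

variable {Ω : Type*} [MeasurableSpace Ω] {μ : Measure Ω}

lemma heinrichE_bound [IsProbabilityMeasure μ] (U : ℕ → Ω → ℂ) (d : ℕ → ℝ) (n : ℕ)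
    (hd : ∀ i, 0 ≤ d i)
    (hA : ∀ p q : ℕ, 1 ≤ p → q ≤ n →
      ∫ ω, ∏ i ∈ Finset.Icc p q, ‖U i ω‖ ∂μ ≤ ∏ i ∈ Finset.Icc p q, d i) :
    ∀ k j : ℕ, 1 ≤ j → j ≤ k → k ≤ n →
      ‖heinrichE μ U j k‖ ≤ 2 ^ (k - j) * ∏ i ∈ Finset.Icc j k, d i := by
  intro k
  induction k using Nat.strong_induction_on with
  | _ k ih =>
    intro j hj1 hjk hkn
    have hPd : (0:ℝ) ≤ ∏ i ∈ Finset.Icc j k, d i := Finset.prod_nonneg fun i _ => hd i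
    have hnormint : ∀ p q : ℕ, 1 ≤ p → q ≤ n →
        ‖∫ ω, ∏ i ∈ Finset.Icc p q, U i ω ∂μ‖ ≤ ∏ i ∈ Finset.Icc p q, d i := by
      intro p q hp hq
      refine le_trans (norm_integral_le_integral_norm _) ?_
      refine le_trans (le_of_eq (integral_congr_ae (Filter.Eventually.of_forall fun ω => ?_)))
        (hA p q hp hq)
      exact norm_prod _ _
    have hsplit : ∀ l : ℕ, j ≤ l → l < k →
        (∏ i ∈ Finset.Icc j l, d i) * ∏ i ∈ Finset.Icc (l+1) k, d i
          = ∏ i ∈ Finset.Icc j k, d i := by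
      intro l h1 h2
      rw [← Finset.prod_union (by
        rw [Finset.disjoint_left]
        intro x hx hx'
        rw [Finset.mem_Icc] at hx hx'
        omega)]
      congr 1
      ext x
      simp only [Finset.mem_union, Finset.mem_Icc]
      omega
    rw [heinrichE]
    refine le_trans (norm_sub_le _ _) ?_
    have hterm : ‖∑ l ∈ (Finset.Ico j k).attach,
        heinrichE μ U j l.1 * ∫ ω, ∏ i ∈ Finset.Icc (l.1 + 1) k, U i ω ∂μ‖
        ≤ (2 ^ (k - j) - 1) * ∏ i ∈ Finset.Icc j k, d i := by
      refine le_trans (norm_sum_le _ _) ?_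
      have hbound : ∀ l ∈ (Finset.Ico j k).attach,
          ‖heinrichE μ U j l.1 * ∫ ω, ∏ i ∈ Finset.Icc (l.1 + 1) k, U i ω ∂μ‖
          ≤ 2 ^ (l.1 - j) * ∏ i ∈ Finset.Icc j k, d i := by
        intro l _
        have hl := Finset.mem_Ico.mp l.2
        rw [norm_mul]
        calc ‖heinrichE μ U j l.1‖ * ‖∫ ω, ∏ i ∈ Finset.Icc (l.1 + 1) k, U i ω ∂μ‖
            ≤ (2 ^ (l.1 - j) * ∏ i ∈ Finset.Icc j l.1, d i)
              * ∏ i ∈ Finset.Icc (l.1+1) k, d i := by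
              refine mul_le_mul (ih l.1 hl.2 j hj1 hl.1 (le_trans (le_of_lt hl.2) hkn))
                (hnormint (l.1+1) k (by omega) hkn) (norm_nonneg _)
                (mul_nonneg (by positivity) (Finset.prod_nonneg fun i _ => hd i))
          _ = 2 ^ (l.1 - j) * ∏ i ∈ Finset.Icc j k, d i := by
              rw [mul_assoc, hsplit l.1 hl.1 hl.2]
      refine le_trans (Finset.sum_le_sum hbound) ?_
      rw [← Finset.sum_mul]
      have : ∑ l ∈ (Finset.Ico j k).attach, (2:ℝ) ^ (l.1 - j) = 2 ^ (k - j) - 1 := by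
        rw [Finset.sum_attach (Finset.Ico j k) (fun l => (2:ℝ) ^ (l - j)),
          Finset.sum_Ico_eq_sum_range]
        have : ∀ i, (2:ℝ) ^ (j + i - j) = 2 ^ i := fun i => by congr 1; omega
        rw [Finset.sum_congr rfl fun i _ => this i, geom_sum_eq (by norm_num)]
        norm_num
      rw [this]
    calc ‖∫ ω, ∏ i ∈ Finset.Icc j k, U i ω ∂μ‖ + ‖∑ l ∈ (Finset.Ico j k).attach,
          heinrichE μ U j l.1 * ∫ ω, ∏ i ∈ Finset.Icc (l.1 + 1) k, U i ω ∂μ‖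
        ≤ (∏ i ∈ Finset.Icc j k, d i) + (2 ^ (k - j) - 1) * ∏ i ∈ Finset.Icc j k, d i :=
          add_le_add (hnormint j k hj1 hkn) hterm
      _ = 2 ^ (k - j) * ∏ i ∈ Finset.Icc j k, d i := by ring

end Cumulant

set_option maxHeartbeats 2000000

/-- Lemma 5, estimate (31) (first part): absolute convergence of the logarithmic
series `A(u) = Σ_{k=1}^n Σ_{j=1}^∞ (-1)^{j+1}(φ_k(u)-1)^j / j` and `|A(u)| ≤ 4a²Γ₁`. -/
theorem heinrich_log_sum_bound (C0 h t : ℝ) (hC0 : 1 ≤ C0) (hh : 0 ≤ h)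
    (u : ℂ) (hu : u = t * Complex.I + h)
    (Ω : Type*) [MeasurableSpace Ω] (μ : Measure Ω) [IsProbabilityMeasure μ]
    (n : ℕ) (X : ℕ → Ω → ℕ) (hX : ∀ i, Measurable (X i))
    (hbd : ∀ i, 1 ≤ i → i ≤ n → ∀ᵐ ω ∂μ, ((X i ω : ℝ)) ≤ C0)
    (hdep : OneDependent μ n X)
    (a Γ₁ : ℝ) (ha : a = Real.exp (h * C0) * (2 + h) * Real.sqrt C0)
    (hΓ : Γ₁ = ∑ j ∈ Finset.Icc 1 n, facMoment μ (X j) 1)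
    (hsmall : ∀ j ∈ Finset.Icc 1 n, a ^ 2 * facMoment μ (X j) 1 ≤ 1 / 100) :
    (∀ k ∈ Finset.Icc 1 n,
      Summable (fun j : ℕ =>
        ‖(-1 : ℂ) ^ j * (heinrichPhi μ X u k - 1) ^ (j + 1) / (j + 1)‖)) ∧
    ‖∑ k ∈ Finset.Icc 1 n,
        ∑' j : ℕ, (-1 : ℂ) ^ j * (heinrichPhi μ X u k - 1) ^ (j + 1) / (j + 1)‖ ≤
      4 * a ^ 2 * Γ₁ := by
  have hC00 : (0:ℝ) ≤ C0 := by linarith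
  set ν : ℕ → ℝ := fun i => facMoment μ (X i) 1 with hνdef
  have hν : ∀ i, ν i = ∫ ω, (X i ω : ℝ) ∂μ := by
    intro i; simp [hνdef, facMoment]
  have hν0 : ∀ i, 0 ≤ ν i := by
    intro i; rw [hν]; exact integral_nonneg fun ω => by positivity
  set b : ℝ := Real.exp (h * C0) * (2 + h) with hbdef
  have hexp1 : 1 ≤ Real.exp (h * C0) := Real.one_le_exp (by positivity)
  have hb2 : 2 ≤ b := by nlinarith
  have hb0 : 0 ≤ b := by linarith
  have hab : a = b * Real.sqrt C0 := by rw [ha]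
  have ha2 : a ^ 2 = b ^ 2 * C0 := by rw [hab, mul_pow, Real.sq_sqrt hC00]
  have ha0 : 0 ≤ a := by rw [hab]; positivity
  have hba : 2 * b ≤ a ^ 2 := by nlinarith
  have hsm : ∀ i ∈ Finset.Icc 1 n, a ^ 2 * ν i ≤ 1/100 := hsmall
  set d : ℕ → ℝ := fun i => Real.sqrt (a ^ 2 * ν i) with hddef
  have hd0 : ∀ i, 0 ≤ d i := fun i => Real.sqrt_nonneg _
  have hdsq : ∀ i, d i ^ 2 = a ^ 2 * ν i := fun i =>
    Real.sq_sqrt (mul_nonneg (sq_nonneg a) (hν0 i))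
  have hdle : ∀ i ∈ Finset.Icc 1 n, d i ≤ 1/10 := by
    intro i hi
    rw [hddef]
    rw [show (1:ℝ)/10 = Real.sqrt (1/100) by
      rw [show (1:ℝ)/100 = (1/10)^2 by norm_num, Real.sqrt_sq (by norm_num)]]
    exact Real.sqrt_le_sqrt (hsm i hi)
  have measY : ∀ i, Measurable (fun ω => Complex.exp (u * (X i ω : ℂ)) - 1) := fun i =>
    (Complex.measurable_exp.comp (measurable_const.mul
      (measurable_from_top.comp (hX i)))).sub measurable_const
  -- pointwise exponential bounds
  have habs_exp : ∀ m : ℕ, ‖Complex.exp (u * (m:ℂ))‖ = Real.exp (h * m) := by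
    intro m
    rw [Complex.norm_exp]
    congr 1
    rw [hu]
    simp [Complex.add_re, Complex.mul_re]
  have hYabs : ∀ m : ℕ, ‖Complex.exp (u * (m:ℂ)) - 1‖ ≤ Real.exp (h * m) + 1 := by
    intro m
    refine le_trans (norm_sub_le _ _) ?_
    rw [habs_exp m, norm_one]
  have hYkey : ∀ m : ℕ, (m:ℝ) ≤ C0 → ‖Complex.exp (u * (m:ℂ)) - 1‖ ≤ b * m := by
    intro m hm
    rcases Nat.eq_zero_or_pos m with rfl | hm1
    · simp
    · have hdecomp : u * (m:ℂ) = (↑(t * m) * Complex.I + ↑(h * m)) := by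
        rw [hu]; push_cast; ring
      have hsum : Complex.exp (u * (m:ℂ)) - 1
          = Complex.exp (↑(t*m) * Complex.I) * (Complex.exp ((h*m : ℝ) : ℂ) - 1)
            + (Complex.exp (↑(t*m) * Complex.I) - 1) := by
        rw [hdecomp, Complex.exp_add]; ring
      have h1 : ‖Complex.exp ((↑(t*m)) * Complex.I)‖ = 1 := by
        exact Complex.norm_exp_ofReal_mul_I _
      have h2 : ‖Complex.exp (((h*m : ℝ)) : ℂ) - 1‖ = Real.exp (h*m) - 1 := by
        rw [← Complex.ofReal_exp, ← Complex.ofReal_one, ← Complex.ofReal_sub,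
          Complex.norm_real, Real.norm_eq_abs, abs_of_nonneg (by
            have : (1:ℝ) ≤ Real.exp (h*m) := Real.one_le_exp (by positivity)
            linarith)]
      have h3 : ‖Complex.exp ((↑(t*m)) * Complex.I) - 1‖ ≤ 2 := by
        refine le_trans (norm_sub_le _ _) ?_
        rw [h1, norm_one]; norm_num
      have hexpm : Real.exp (h*m) - 1 ≤ (h*m) * Real.exp (h*m) := by
        have h4 := Real.add_one_le_exp (-(h*m))
        rw [Real.exp_neg] at h4
        have h5 : 0 < Real.exp (h*m) := Real.exp_pos _
        have h6 : (1 - h*m) * Real.exp (h*m) ≤ 1 := by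
          have := mul_le_mul_of_nonneg_right h4 (le_of_lt h5)
          rw [inv_mul_cancel₀ (ne_of_gt h5)] at this
          linarith [this]
        nlinarith
      have hexpC : Real.exp (h*m) ≤ Real.exp (h*C0) :=
        Real.exp_le_exp.mpr (mul_le_mul_of_nonneg_left hm hh)
      have hm1' : (1:ℝ) ≤ m := by exact_mod_cast hm1
      calc ‖Complex.exp (u * (m:ℂ)) - 1‖
          ≤ ‖Complex.exp (↑(t*m) * Complex.I) * (Complex.exp ((h*m : ℝ) : ℂ) - 1)‖
            + ‖Complex.exp (↑(t*m) * Complex.I) - 1‖ := by rw [hsum]; exact norm_add_le _ _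
        _ = 1 * (Real.exp (h*m) - 1) + ‖Complex.exp (↑(t*m) * Complex.I) - 1‖ := by
            rw [norm_mul, h1, h2]
        _ ≤ 1 * (Real.exp (h*m) - 1) + 2 := by linarith
        _ ≤ b * m := by
            rw [hbdef]
            have : (h*m) * Real.exp (h*m) ≤ (h*m) * Real.exp (h*C0) :=
              mul_le_mul_of_nonneg_left hexpC (by positivity)
            nlinarith
  -- a.e. facts
  have hae : ∀ᵐ ω ∂μ, ∀ i, i ∈ Finset.Icc 1 n → (X i ω : ℝ) ≤ C0 := by
    rw [ae_all_iff]
    intro i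
    by_cases hi : i ∈ Finset.Icc 1 n
    · filter_upwards [hbd i (Finset.mem_Icc.mp hi).1 (Finset.mem_Icc.mp hi).2] with ω hω _
      exact hω
    · filter_upwards with ω hmem
      exact absurd hmem hi
  have haeY : ∀ᵐ ω ∂μ, ∀ i, i ∈ Finset.Icc 1 n →
      ‖Complex.exp (u * (X i ω : ℂ)) - 1‖ ≤ b * (X i ω : ℝ) := by
    filter_upwards [hae] with ω hω i hi
    exact hYkey (X i ω) (hω i hi)
  have hYle : ∀ᵐ ω ∂μ, ∀ i, i ∈ Finset.Icc 1 n →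
      ‖Complex.exp (u * (X i ω : ℂ)) - 1‖ ≤ b * C0 := by
    filter_upwards [haeY, hae] with ω h1 h2 i hi
    calc ‖Complex.exp (u * (X i ω : ℂ)) - 1‖ ≤ b * (X i ω : ℝ) := h1 i hi
      _ ≤ b * C0 := mul_le_mul_of_nonneg_left (h2 i hi) hb0
  have intX : ∀ i ∈ Finset.Icc 1 n, Integrable (fun ω => (X i ω : ℝ)) μ := by
    intro i hi
    refine integrable_of_ae_bdd ((measurable_from_top.comp (hX i)).aestronglyMeasurable) C0 ?_
    filter_upwards [hae] with ω hω
    rw [Real.norm_eq_abs, abs_of_nonneg (by positivity)]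
    exact hω i hi
  have intY1 : ∀ i ∈ Finset.Icc 1 n,
      Integrable (fun ω => ‖Complex.exp (u * (X i ω : ℂ)) - 1‖) μ := by
    intro i hi
    refine integrable_of_ae_bdd ((measY i).norm.aestronglyMeasurable) (b * C0) ?_
    filter_upwards [hYle] with ω hω
    rw [Real.norm_eq_abs, abs_of_nonneg (norm_nonneg _)]
    exact hω i hi
  have hY1 : ∀ i ∈ Finset.Icc 1 n,
      ∫ ω, ‖Complex.exp (u * (X i ω : ℂ)) - 1‖ ∂μ ≤ b * ν i := by
    intro i hi
    rw [hν, ← integral_const_mul]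
    refine integral_mono_ae (intY1 i hi) ((intX i hi).const_mul b) ?_
    filter_upwards [haeY] with ω hω
    exact hω i hi
  have hY2 : ∀ i ∈ Finset.Icc 1 n,
      ∫ ω, ‖Complex.exp (u * (X i ω : ℂ)) - 1‖^2 ∂μ ≤ a ^ 2 * ν i := by
    intro i hi
    rw [ha2, hν, mul_assoc, ← integral_const_mul, ← integral_const_mul]
    refine integral_mono_ae ?_ (((intX i hi).const_mul (C0)).const_mul (b^2)) ?_
    · refine integrable_of_ae_bdd (((measY i).norm.pow measurable_const).aestronglyMeasurable)
        ((b * C0)^2) ?_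
      filter_upwards [hYle] with ω hω
      rw [Real.norm_eq_abs, abs_of_nonneg (by positivity)]
      exact pow_le_pow_left₀ (norm_nonneg _) (hω i hi) 2
    · filter_upwards [haeY, hae] with ω h1 h2
      have hx0 : (0:ℝ) ≤ (X i ω : ℝ) := by positivity
      have hn0 : (0:ℝ) ≤ ‖Complex.exp (u * (X i ω : ℂ)) - 1‖ := norm_nonneg _
      nlinarith [mul_le_mul (h1 i hi) (h1 i hi) hn0 (mul_nonneg hb0 hx0),
        mul_nonneg (mul_nonneg (mul_nonneg hb0 hb0) hx0) (sub_nonneg.mpr (h2 i hi))]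
  -- factorization of integrals of products over sparse index sets
  set N0 : ℕ := ⌈C0⌉₊ with hN0
  set G : ℕ → ℕ → ℝ := fun i m => ‖Complex.exp (u * ((min m N0 : ℕ) : ℂ)) - 1‖^2 with hGdef
  have hGbd : ∀ i m, |G i m| ≤ (Real.exp (h * N0) + 1)^2 := by
    intro i m
    rw [hGdef, abs_of_nonneg (by positivity)]
    have h1 := hYabs (min m N0)
    have h2 : Real.exp (h * (min m N0 : ℕ)) + 1 ≤ Real.exp (h * N0) + 1 := by
      have h3 : ((min m N0 : ℕ) : ℝ) ≤ (N0 : ℝ) := by exact_mod_cast min_le_right m N0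
      have h4 := Real.exp_le_exp.mpr (mul_le_mul_of_nonneg_left h3 hh)
      linarith
    calc ‖Complex.exp (u * ((min m N0 : ℕ) : ℂ)) - 1‖^2
        ≤ (Real.exp (h * (min m N0 : ℕ)) + 1)^2 := pow_le_pow_left₀ (norm_nonneg _) h1 2
      _ ≤ (Real.exp (h * N0) + 1)^2 := pow_le_pow_left₀ (by positivity) h2 2
  have hGY : ∀ᵐ ω ∂μ, ∀ i, i ∈ Finset.Icc 1 n →
      G i (X i ω) = ‖Complex.exp (u * (X i ω : ℂ)) - 1‖^2 := by
    filter_upwards [hae] with ω hω i hi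
    have hminXi : min (X i ω) N0 = X i ω := by
      have h5 : (X i ω : ℝ) ≤ (N0 : ℝ) := le_trans (hω i hi) (Nat.le_ceil C0)
      exact min_eq_left (by exact_mod_cast h5)
    rw [hGdef]
    simp only [hminXi]
  have hsq : ∀ s : Finset ℕ, s ⊆ Finset.Icc 1 n →
      (∀ i ∈ s, ∀ j ∈ s, i < j → i + 2 ≤ j) →
      ∫ ω, ∏ i ∈ s, ‖Complex.exp (u * (X i ω : ℂ)) - 1‖^2 ∂μ ≤ (∏ i ∈ s, d i)^2 := by
    intro s hs hgaps
    have e1 : ∫ ω, ∏ i ∈ s, ‖Complex.exp (u * (X i ω : ℂ)) - 1‖^2 ∂μ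
        = ∫ ω, ∏ i ∈ s, G i (X i ω) ∂μ := by
      refine integral_congr_ae ?_
      filter_upwards [hGY] with ω hω
      exact (Finset.prod_congr rfl fun i hi => (hω i (hs hi))).symm
    rw [e1, oneDep_prod_integral n X hX hdep G (fun _ => (Real.exp (h * N0) + 1)^2)
      hGbd s hs hgaps, ← Finset.prod_pow]
    refine Finset.prod_le_prod (fun i _ => integral_nonneg fun ω => by positivity) ?_
    intro i hi
    have e2 : ∫ ω, G i (X i ω) ∂μ
        = ∫ ω, ‖Complex.exp (u * (X i ω : ℂ)) - 1‖^2 ∂μ := by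
      refine integral_congr_ae ?_
      filter_upwards [hGY] with ω hω
      exact hω i (hs hi)
    rw [e2, hdsq i]
    exact hY2 i (hs hi)
  -- the L¹ product bound (Cauchy-Schwarz + parity split)
  have hA : ∀ p q : ℕ, 1 ≤ p → q ≤ n →
      ∫ ω, ∏ i ∈ Finset.Icc p q, ‖Complex.exp (u * (X i ω : ℂ)) - 1‖ ∂μ
        ≤ ∏ i ∈ Finset.Icc p q, d i := by
    intro p q hp hq
    have hsub : Finset.Icc p q ⊆ Finset.Icc 1 n := Finset.Icc_subset_Icc hp hq
    set sE := (Finset.Icc p q).filter (fun i => Even i) with hsE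
    set sO := (Finset.Icc p q).filter (fun i => ¬ Even i) with hsO
    have hsubE : sE ⊆ Finset.Icc 1 n := le_trans (Finset.filter_subset _ _) hsub
    have hsubO : sO ⊆ Finset.Icc 1 n := le_trans (Finset.filter_subset _ _) hsub
    have measprod : ∀ s' : Finset ℕ,
        Measurable (fun ω => ∏ i ∈ s', ‖Complex.exp (u * (X i ω : ℂ)) - 1‖) :=
      fun s' => Finset.measurable_prod _ fun i _ => (measY i).norm
    have intmul : ∀ s₁ s₂ : Finset ℕ, s₁ ⊆ Finset.Icc 1 n → s₂ ⊆ Finset.Icc 1 n →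
        Integrable (fun ω => (∏ i ∈ s₁, ‖Complex.exp (u * (X i ω : ℂ)) - 1‖)
          * ∏ i ∈ s₂, ‖Complex.exp (u * (X i ω : ℂ)) - 1‖) μ := by
      intro s₁ s₂ h₁ h₂
      refine integrable_of_ae_bdd ((measprod s₁).mul (measprod s₂)).aestronglyMeasurable
        ((b*C0)^s₁.card * (b*C0)^s₂.card) ?_
      have hbC0 : (0:ℝ) ≤ b * C0 := by positivity
      filter_upwards [hYle] with ω hω
      rw [Real.norm_eq_abs, abs_of_nonneg (mul_nonneg
        (Finset.prod_nonneg fun i _ => norm_nonneg _)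
        (Finset.prod_nonneg fun i _ => norm_nonneg _))]
      have p1 : ∏ i ∈ s₁, ‖Complex.exp (u * (X i ω : ℂ)) - 1‖ ≤ (b*C0)^s₁.card := by
        rw [← Finset.prod_const]
        exact Finset.prod_le_prod (fun i _ => norm_nonneg _) (fun i hi => hω i (h₁ hi))
      have p2 : ∏ i ∈ s₂, ‖Complex.exp (u * (X i ω : ℂ)) - 1‖ ≤ (b*C0)^s₂.card := by
        rw [← Finset.prod_const]
        exact Finset.prod_le_prod (fun i _ => norm_nonneg _) (fun i hi => hω i (h₂ hi))
      exact mul_le_mul p1 p2 (Finset.prod_nonneg fun i _ => norm_nonneg _) (by positivity)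
    have hsq2 : ∀ s' : Finset ℕ, s' ⊆ Finset.Icc 1 n →
        (∀ i ∈ s', ∀ j ∈ s', i < j → i + 2 ≤ j) →
        ∫ ω, (∏ i ∈ s', ‖Complex.exp (u * (X i ω : ℂ)) - 1‖)
          * ∏ i ∈ s', ‖Complex.exp (u * (X i ω : ℂ)) - 1‖ ∂μ ≤ (∏ i ∈ s', d i)^2 := by
      intro s' hs' hgaps'
      have e3 : ∀ ω : Ω, (∏ i ∈ s', ‖Complex.exp (u * (X i ω : ℂ)) - 1‖)
          * ∏ i ∈ s', ‖Complex.exp (u * (X i ω : ℂ)) - 1‖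
          = ∏ i ∈ s', ‖Complex.exp (u * (X i ω : ℂ)) - 1‖^2 := by
        intro ω
        rw [← Finset.prod_mul_distrib]
        exact Finset.prod_congr rfl fun i _ => (sq _).symm
      rw [integral_congr_ae (Filter.Eventually.of_forall e3)]
      exact hsq s' hs' hgaps'
    have hgapE : ∀ i ∈ sE, ∀ j ∈ sE, i < j → i + 2 ≤ j := by
      intro i hi j hj hij
      have h6 := (Finset.mem_filter.mp hi).2
      have h7 := (Finset.mem_filter.mp hj).2
      rw [Nat.even_iff] at h6 h7
      omega
    have hgapO : ∀ i ∈ sO, ∀ j ∈ sO, i < j → i + 2 ≤ j := by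
      intro i hi j hj hij
      have h6 := (Finset.mem_filter.mp hi).2
      have h7 := (Finset.mem_filter.mp hj).2
      rw [Nat.even_iff] at h6 h7
      omega
    have hCS := integral_mul_le_sqrt (μ := μ)
      (f := fun ω => ∏ i ∈ sE, ‖Complex.exp (u * (X i ω : ℂ)) - 1‖)
      (g := fun ω => ∏ i ∈ sO, ‖Complex.exp (u * (X i ω : ℂ)) - 1‖)
      (intmul sE sE hsubE hsubE) (intmul sO sO hsubO hsubO) (intmul sE sO hsubE hsubO)
    have e4 : ∀ ω : Ω, ∏ i ∈ Finset.Icc p q, ‖Complex.exp (u * (X i ω : ℂ)) - 1‖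
        = (∏ i ∈ sE, ‖Complex.exp (u * (X i ω : ℂ)) - 1‖)
          * ∏ i ∈ sO, ‖Complex.exp (u * (X i ω : ℂ)) - 1‖ :=
      fun ω => (Finset.prod_filter_mul_prod_filter_not _ _ _).symm
    rw [integral_congr_ae (Filter.Eventually.of_forall e4)]
    refine le_trans hCS ?_
    have hsqrtE : Real.sqrt (∫ ω, (∏ i ∈ sE, ‖Complex.exp (u * (X i ω : ℂ)) - 1‖)
        * ∏ i ∈ sE, ‖Complex.exp (u * (X i ω : ℂ)) - 1‖ ∂μ) ≤ ∏ i ∈ sE, d i := by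
      refine le_trans (Real.sqrt_le_sqrt (hsq2 sE hsubE hgapE)) ?_
      rw [Real.sqrt_sq (Finset.prod_nonneg fun i _ => hd0 i)]
    have hsqrtO : Real.sqrt (∫ ω, (∏ i ∈ sO, ‖Complex.exp (u * (X i ω : ℂ)) - 1‖)
        * ∏ i ∈ sO, ‖Complex.exp (u * (X i ω : ℂ)) - 1‖ ∂μ) ≤ ∏ i ∈ sO, d i := by
      refine le_trans (Real.sqrt_le_sqrt (hsq2 sO hsubO hgapO)) ?_
      rw [Real.sqrt_sq (Finset.prod_nonneg fun i _ => hd0 i)]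
    calc Real.sqrt _ * Real.sqrt _
        ≤ (∏ i ∈ sE, d i) * ∏ i ∈ sO, d i :=
          mul_le_mul hsqrtE hsqrtO (Real.sqrt_nonneg _)
            (Finset.prod_nonneg fun i _ => hd0 i)
      _ = ∏ i ∈ Finset.Icc p q, d i := Finset.prod_filter_mul_prod_filter_not _ _ _
  -- the cumulant bound
  have hcum : ∀ k j : ℕ, 1 ≤ j → j ≤ k → k ≤ n →
      ‖heinrichE μ (fun i ω => Complex.exp (u * (X i ω : ℂ)) - 1) j k‖
        ≤ 2 ^ (k - j) * ∏ i ∈ Finset.Icc j k, d i :=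
    heinrichE_bound (fun i ω => Complex.exp (u * (X i ω : ℂ)) - 1) d n hd0 hA
  -- the comparison function c and its smallness
  set c : ℕ → ℝ := fun k => b * ν k
      + ∑ j ∈ Finset.Icc 1 (k-1), (21/10:ℝ)^(k-j) * ∏ i ∈ Finset.Icc j k, d i with hcdef
  have hc0 : ∀ k, 0 ≤ c k := fun k => add_nonneg (mul_nonneg hb0 (hν0 k))
    (Finset.sum_nonneg fun j _ =>
      mul_nonneg (by positivity) (Finset.prod_nonneg fun i _ => hd0 i))
  have hcsmall : ∀ k ∈ Finset.Icc 1 n, c k ≤ 1/25 := by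
    intro k hk
    obtain ⟨hk1, hkn⟩ := Finset.mem_Icc.mp hk
    have h1 : b * ν k ≤ 1/200 := by nlinarith [hν0 k, hsm k hk]
    have h2 : ∑ j ∈ Finset.Icc 1 (k-1), (21/10:ℝ)^(k-j) * ∏ i ∈ Finset.Icc j k, d i
        ≤ (1/10) * ((21/100) / (1 - 21/100)) := by
      have hterm : ∀ j ∈ Finset.Icc 1 (k-1),
          (21/10:ℝ)^(k-j) * ∏ i ∈ Finset.Icc j k, d i
          ≤ (1/10) * (21/100)^(k-j) := by
        intro j hj
        obtain ⟨hj1, hjk⟩ := Finset.mem_Icc.mp hj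
        have hPP : ∏ i ∈ Finset.Icc j k, d i ≤ (1/10:ℝ)^(k-j+1) := by
          calc ∏ i ∈ Finset.Icc j k, d i ≤ ∏ i ∈ Finset.Icc j k, (1/10:ℝ) :=
              Finset.prod_le_prod (fun i _ => hd0 i) (fun i hi => hdle i (by
                rw [Finset.mem_Icc] at hi ⊢
                omega))
            _ = (1/10:ℝ)^(k-j+1) := by
              rw [Finset.prod_const, Nat.card_Icc]
              congr 1
              omega
        calc (21/10:ℝ)^(k-j) * ∏ i ∈ Finset.Icc j k, d i
            ≤ (21/10:ℝ)^(k-j) * (1/10)^(k-j+1) :=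
            mul_le_mul_of_nonneg_left hPP (by positivity)
          _ = (1/10) * (21/100)^(k-j) := by
            rw [show (21:ℝ)/100 = (21/10) * (1/10) by norm_num, mul_pow, pow_succ]
            ring
      calc ∑ j ∈ Finset.Icc 1 (k-1), (21/10:ℝ)^(k-j) * ∏ i ∈ Finset.Icc j k, d i
          ≤ ∑ j ∈ Finset.Icc 1 (k-1), (1/10:ℝ) * (21/100)^(k-j) :=
            Finset.sum_le_sum hterm
        _ = (1/10) * ∑ j ∈ Finset.Icc 1 (k-1), (21/100:ℝ)^(k-j) := by
            rw [Finset.mul_sum]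
        _ ≤ (1/10) * ((21/100) / (1 - 21/100)) := by
            refine mul_le_mul_of_nonneg_left
              (sum_geo_shift' (by norm_num) (by norm_num) _ k (fun j hj => by
                have := Finset.mem_Icc.mp hj
                omega)) (by norm_num)
    have hck : c k = b * ν k
        + ∑ j ∈ Finset.Icc 1 (k-1), (21/10:ℝ)^(k-j) * ∏ i ∈ Finset.Icc j k, d i := rfl
    rw [hck]
    norm_num at h2 ⊢
    linarith
  -- the key bound on ‖φ_k - 1‖ by strong induction
  have hnormphi : ∀ k, 1 ≤ k → k ≤ n → ‖heinrichPhi μ X u k - 1‖ ≤ c k := by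
    intro k
    induction k using Nat.strong_induction_on with
    | _ k ih =>
      intro hk1 hkn
      match k, hk1, hkn, ih with
      | 1, _, hkn, ih =>
        have he : heinrichPhi μ X u 1 = ∫ ω, Complex.exp (u * (X 1 ω : ℂ)) ∂μ := by
          rw [heinrichPhi]
        have h1n : (1:ℕ) ∈ Finset.Icc 1 n := Finset.mem_Icc.mpr ⟨le_rfl, hkn⟩
        have hint : Integrable (fun ω => Complex.exp (u * (X 1 ω : ℂ))) μ := by
          refine integrable_of_ae_bdd (Complex.measurable_exp.comp
            (measurable_const.mul (measurable_from_top.comp (hX 1)))).aestronglyMeasurable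
            (Real.exp (h * C0)) ?_
          filter_upwards [hae] with ω hω
          rw [habs_exp]
          exact Real.exp_le_exp.mpr (mul_le_mul_of_nonneg_left (hω 1 h1n) hh)
        have hsub1 : heinrichPhi μ X u 1 - 1
            = ∫ ω, (Complex.exp (u * (X 1 ω : ℂ)) - 1) ∂μ := by
          rw [he, integral_sub hint (integrable_const 1), integral_const]
          simp
        rw [hsub1]
        have hc1 : c 1 = b * ν 1 := by
          have : Finset.Icc 1 (1-1) = (∅ : Finset ℕ) := rfl
          simp [hcdef, this]
        rw [hc1]
        refine le_trans (norm_integral_le_integral_norm _) ?_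
        exact hY1 1 h1n
      | (K+2), _, hkn, ih =>
        have hKn : K + 1 ≤ n := by omega
        rw [heinrichPhi]
        have hrw : (1 : ℂ) + (∫ ω, (Complex.exp (u * (X (K + 2) ω : ℂ)) - 1) ∂μ)
            + (∑ j ∈ (Finset.Icc 1 (K + 1)).attach,
              heinrichE μ (fun i ω => Complex.exp (u * (X i ω : ℂ)) - 1) j.1 (K + 2) /
                ∏ i ∈ (Finset.Icc j.1 (K + 1)).attach, heinrichPhi μ X u i.1) - 1
            = (∫ ω, (Complex.exp (u * (X (K + 2) ω : ℂ)) - 1) ∂μ)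
            + (∑ j ∈ (Finset.Icc 1 (K + 1)).attach,
              heinrichE μ (fun i ω => Complex.exp (u * (X i ω : ℂ)) - 1) j.1 (K + 2) /
                ∏ i ∈ (Finset.Icc j.1 (K + 1)).attach, heinrichPhi μ X u i.1) := by ring
        rw [hrw]
        have hk2n : (K+2 : ℕ) ∈ Finset.Icc 1 n := Finset.mem_Icc.mpr ⟨by omega, hkn⟩
        have hAle : ‖∫ ω, (Complex.exp (u * (X (K + 2) ω : ℂ)) - 1) ∂μ‖ ≤ b * ν (K+2) :=
          le_trans (norm_integral_le_integral_norm _) (hY1 (K+2) hk2n)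
        -- bound the sum term by term
        have hphilow : ∀ i : ℕ, 1 ≤ i → i ≤ K + 1 → (24/25 : ℝ) ≤ ‖heinrichPhi μ X u i‖ := by
          intro i hi1 hi2
          have h8 := ih i (by omega) hi1 (by omega)
          have h9 := hcsmall i (Finset.mem_Icc.mpr ⟨hi1, by omega⟩)
          have h10 := abs_norm_sub_norm_le (heinrichPhi μ X u i) 1
          rw [norm_one] at h10
          have h12 : (1:ℝ) - ‖heinrichPhi μ X u i - 1‖ ≤ ‖heinrichPhi μ X u i‖ := by
            have h13 := (abs_le.mp h10).1
            linarith
          calc (24/25 : ℝ) = 1 - 1/25 := by norm_num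
            _ ≤ 1 - c i := sub_le_sub_left h9 1
            _ ≤ 1 - ‖heinrichPhi μ X u i - 1‖ := sub_le_sub_left h8 1
            _ ≤ ‖heinrichPhi μ X u i‖ := h12
        have hSle : ‖∑ j ∈ (Finset.Icc 1 (K + 1)).attach,
            heinrichE μ (fun i ω => Complex.exp (u * (X i ω : ℂ)) - 1) j.1 (K + 2) /
              ∏ i ∈ (Finset.Icc j.1 (K + 1)).attach, heinrichPhi μ X u i.1‖
            ≤ ∑ j ∈ Finset.Icc 1 (K+1),
              (21/10:ℝ)^(K+2-j) * ∏ i ∈ Finset.Icc j (K+2), d i := by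
          refine le_trans (norm_sum_le _ _) (le_trans (Finset.sum_le_sum ?_)
            (le_of_eq (Finset.sum_attach (Finset.Icc 1 (K+1)) (fun j =>
            (21/10:ℝ)^(K+2-j) * ∏ i ∈ Finset.Icc j (K+2), d i))))
          intro j _
          obtain ⟨hj1, hj2⟩ := Finset.mem_Icc.mp j.2
          rw [norm_div]
          have hnum : ‖heinrichE μ (fun i ω => Complex.exp (u * (X i ω : ℂ)) - 1) j.1 (K + 2)‖
              ≤ 2 ^ (K+2-j.1) * ∏ i ∈ Finset.Icc j.1 (K+2), d i :=
            hcum (K+2) j.1 hj1 (by omega) hkn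
          have hden : (24/25:ℝ)^(K+2-j.1)
              ≤ ‖∏ i ∈ (Finset.Icc j.1 (K + 1)).attach, heinrichPhi μ X u i.1‖ := by
            rw [Finset.prod_attach (Finset.Icc j.1 (K+1)) (fun i => heinrichPhi μ X u i),
              norm_prod]
            calc (24/25:ℝ)^(K+2-j.1) = ∏ i ∈ Finset.Icc j.1 (K+1), (24/25:ℝ) := by
                  rw [Finset.prod_const, Nat.card_Icc]
              _ ≤ ∏ i ∈ Finset.Icc j.1 (K+1), ‖heinrichPhi μ X u i‖ :=
                  Finset.prod_le_prod (fun i _ => by norm_num)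
                    (fun i hi => hphilow i (by
                      have := Finset.mem_Icc.mp hi
                      omega) (Finset.mem_Icc.mp hi).2)
          have hdenpos : (0:ℝ) < (24/25:ℝ)^(K+2-j.1) := by positivity
          have hPd : (0:ℝ) ≤ ∏ i ∈ Finset.Icc j.1 (K+2), d i :=
            Finset.prod_nonneg fun i _ => hd0 i
          calc ‖heinrichE μ (fun i ω => Complex.exp (u * (X i ω : ℂ)) - 1) j.1 (K + 2)‖ /
              ‖∏ i ∈ (Finset.Icc j.1 (K + 1)).attach, heinrichPhi μ X u i.1‖
              ≤ (2 ^ (K+2-j.1) * ∏ i ∈ Finset.Icc j.1 (K+2), d i) / (24/25:ℝ)^(K+2-j.1) :=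
                div_le_div₀ (by positivity) hnum hdenpos hden
            _ ≤ (21/10:ℝ)^(K+2-j.1) * ∏ i ∈ Finset.Icc j.1 (K+2), d i := by
                rw [div_le_iff₀ hdenpos]
                have h14 : (2:ℝ)^(K+2-j.1) ≤ (21/10)^(K+2-j.1) * (24/25)^(K+2-j.1) := by
                  rw [← mul_pow]
                  exact pow_le_pow_left₀ (by norm_num) (by norm_num) _
                nlinarith [mul_le_mul_of_nonneg_right h14 hPd]
        have hcK : c (K+2) = b * ν (K+2)
            + ∑ j ∈ Finset.Icc 1 (K+1), (21/10:ℝ)^(K+2-j) * ∏ i ∈ Finset.Icc j (K+2), d i := by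
          rw [hcdef]
          norm_num
        refine le_trans (norm_add_le _ _) ?_
        rw [hcK]
        exact add_le_add hAle hSle
  -- summability and termwise geometric bounds
  have hterm : ∀ k ∈ Finset.Icc 1 n, ∀ j : ℕ,
      ‖(-1 : ℂ) ^ j * (heinrichPhi μ X u k - 1) ^ (j + 1) / (j + 1)‖
        ≤ c k * (1/25:ℝ)^j := by
    intro k hk j
    have hz1 : ‖heinrichPhi μ X u k - 1‖ ≤ c k :=
      hnormphi k (Finset.mem_Icc.mp hk).1 (Finset.mem_Icc.mp hk).2
    have hz2 : ‖heinrichPhi μ X u k - 1‖ ≤ 1/25 := le_trans hz1 (hcsmall k hk)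
    have e1 : ‖(-1 : ℂ) ^ j * (heinrichPhi μ X u k - 1) ^ (j + 1) / (j + 1)‖
        = ‖heinrichPhi μ X u k - 1‖ ^ (j+1) / (j + 1 : ℝ) := by
      rw [norm_div, norm_mul, norm_pow, norm_pow, norm_neg, norm_one,
        one_pow, one_mul]
      congr 1
      rw [show ((j : ℂ) + 1) = ((j+1 : ℕ) : ℂ) by push_cast; ring, Complex.norm_natCast]
      push_cast
      ring
    rw [e1]
    have hj1 : (1:ℝ) ≤ (j + 1 : ℝ) := by
      have := Nat.cast_nonneg (α := ℝ) j
      linarith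
    calc ‖heinrichPhi μ X u k - 1‖ ^ (j+1) / (j + 1 : ℝ)
        ≤ ‖heinrichPhi μ X u k - 1‖ ^ (j+1) := div_le_self (by positivity) hj1
      _ = ‖heinrichPhi μ X u k - 1‖ ^ j * ‖heinrichPhi μ X u k - 1‖ := pow_succ _ _
      _ ≤ (1/25:ℝ)^j * c k :=
          mul_le_mul (pow_le_pow_left₀ (norm_nonneg _) hz2 j) hz1 (norm_nonneg _)
            (by positivity)
      _ = c k * (1/25:ℝ)^j := mul_comm _ _
  have hsummable : ∀ k ∈ Finset.Icc 1 n,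
      Summable (fun j : ℕ =>
        ‖(-1 : ℂ) ^ j * (heinrichPhi μ X u k - 1) ^ (j + 1) / (j + 1)‖) := by
    intro k hk
    refine Summable.of_nonneg_of_le (fun j => norm_nonneg _)
      (fun j => hterm k hk j) ?_
    exact (summable_geometric_of_lt_one (by norm_num) (by norm_num)).mul_left (c k)
  refine ⟨hsummable, ?_⟩
  -- bound each inner tsum
  have htsum : ∀ k ∈ Finset.Icc 1 n,
      ‖∑' j : ℕ, (-1 : ℂ) ^ j * (heinrichPhi μ X u k - 1) ^ (j + 1) / (j + 1)‖
        ≤ (25/24) * c k := by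
    intro k hk
    have hs' : Summable (fun j : ℕ =>
        ‖(-1 : ℂ) ^ j * (heinrichPhi μ X u k - 1) ^ (j + 1) / (j + 1)‖) := by
      simpa using hsummable k hk
    refine le_trans (norm_tsum_le_tsum_norm hs') ?_
    have hgeo : Summable (fun j : ℕ => c k * (1/25:ℝ)^j) :=
      (summable_geometric_of_lt_one (by norm_num) (by norm_num)).mul_left _
    refine le_trans (Summable.tsum_le_tsum (fun j => ?_) hs' hgeo) ?_
    · exact hterm k hk j
    · rw [tsum_mul_left, tsum_geometric_of_lt_one (by norm_num) (by norm_num)]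
      have := hc0 k
      rw [show ((1:ℝ) - 1/25)⁻¹ = 25/24 by norm_num]
      linarith
  have hΓ0 : 0 ≤ Γ₁ := by
    rw [hΓ]
    exact Finset.sum_nonneg fun j _ => hν0 j
  -- sum of the linear parts
  have hsum1 : ∑ k ∈ Finset.Icc 1 n, b * ν k ≤ (a^2/2) * Γ₁ := by
    rw [← Finset.mul_sum, ← hΓ]
    nlinarith [hba, hΓ0]
  -- the double sum
  have hDSterm : ∀ k ∈ Finset.Icc 1 n, ∀ j ∈ Finset.Icc 1 (k-1),
      (21/10:ℝ)^(k-j) * ∏ i ∈ Finset.Icc j k, d i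
        ≤ (21/100:ℝ)^(k-j) * (5 * (a^2 * ν j) + 5 * (a^2 * ν k)) := by
    intro k hk j hj
    obtain ⟨hk1, hkn⟩ := Finset.mem_Icc.mp hk
    obtain ⟨hj1, hjk'⟩ := Finset.mem_Icc.mp hj
    have hjk : j < k := by omega
    have hsplit : ∏ i ∈ Finset.Icc j k, d i
        = d j * (∏ i ∈ Finset.Icc (j+1) (k-1), d i) * d k := by
      rw [show Finset.Icc j k = insert j (Finset.Icc (j+1) k) by
          ext x
          simp only [Finset.mem_Icc, Finset.mem_insert]
          omega,
        Finset.prod_insert (by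
          simp only [Finset.mem_Icc]
          omega),
        show Finset.Icc (j+1) k = insert k (Finset.Icc (j+1) (k-1)) by
          ext x
          simp only [Finset.mem_Icc, Finset.mem_insert]
          omega,
        Finset.prod_insert (by
          simp only [Finset.mem_Icc]
          omega)]
      ring
    have hmid : ∏ i ∈ Finset.Icc (j+1) (k-1), d i ≤ (1/10:ℝ)^(k-j-1) := by
      calc ∏ i ∈ Finset.Icc (j+1) (k-1), d i
          ≤ ∏ i ∈ Finset.Icc (j+1) (k-1), (1/10:ℝ) :=
            Finset.prod_le_prod (fun i _ => hd0 i) (fun i hi => hdle i (by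
              rw [Finset.mem_Icc] at hi ⊢
              omega))
        _ = (1/10:ℝ)^(k-j-1) := by
            rw [Finset.prod_const, Nat.card_Icc]
            congr 1
            omega
    have hdd : d j * d k ≤ (a^2 * ν j + a^2 * ν k)/2 := by
      nlinarith [sq_nonneg (d j - d k), hdsq j, hdsq k]
    have hiden : (21/10:ℝ)^(k-j) * (1/10)^(k-j-1) = 10 * (21/100)^(k-j) := by
      obtain ⟨m, hm⟩ : ∃ m, k - j = m + 1 := ⟨k-j-1, by omega⟩
      rw [show k-j-1 = m by omega, hm,
        show (21:ℝ)/100 = (21/10)*(1/10) by norm_num, mul_pow, pow_succ, pow_succ]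
      ring
    calc (21/10:ℝ)^(k-j) * ∏ i ∈ Finset.Icc j k, d i
        = (21/10:ℝ)^(k-j) * (d j * (∏ i ∈ Finset.Icc (j+1) (k-1), d i) * d k) := by
          rw [hsplit]
      _ ≤ (21/10:ℝ)^(k-j) * (d j * (1/10:ℝ)^(k-j-1) * d k) := by
          refine mul_le_mul_of_nonneg_left ?_ (by positivity)
          exact mul_le_mul_of_nonneg_right (mul_le_mul_of_nonneg_left hmid (hd0 j)) (hd0 k)
      _ = (21/10:ℝ)^(k-j) * (1/10:ℝ)^(k-j-1) * (d j * d k) := by ring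
      _ = 10 * (21/100:ℝ)^(k-j) * (d j * d k) := by rw [hiden]
      _ ≤ 10 * (21/100:ℝ)^(k-j) * ((a^2 * ν j + a^2 * ν k)/2) :=
          mul_le_mul_of_nonneg_left hdd (by positivity)
      _ = (21/100:ℝ)^(k-j) * (5 * (a^2 * ν j) + 5 * (a^2 * ν k)) := by ring
  have hgeoconst : ((21:ℝ)/100) / (1 - 21/100) = 21/79 := by norm_num
  have hT2 : ∑ k ∈ Finset.Icc 1 n, ∑ j ∈ Finset.Icc 1 (k-1),
      (21/100:ℝ)^(k-j) * (5 * (a^2 * ν k)) ≤ (105/79) * (a^2 * Γ₁) := by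
    have hinner : ∀ k ∈ Finset.Icc 1 n, ∑ j ∈ Finset.Icc 1 (k-1),
        (21/100:ℝ)^(k-j) * (5 * (a^2 * ν k)) ≤ (21/79) * (5 * (a^2 * ν k)) := by
      intro k hk
      rw [← Finset.sum_mul]
      refine mul_le_mul_of_nonneg_right ?_ (mul_nonneg (by norm_num) (mul_nonneg (sq_nonneg a) (hν0 k)))
      refine le_trans (sum_geo_shift' (by norm_num) (by norm_num) _ k (fun j hj => by
        have h15 := Finset.mem_Icc.mp hj
        have h16 := (Finset.mem_Icc.mp hk).1
        omega)) (le_of_eq hgeoconst)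
    refine le_trans (Finset.sum_le_sum hinner) ?_
    rw [hΓ, Finset.mul_sum, Finset.mul_sum]
    refine Finset.sum_le_sum fun k hk => ?_
    have := mul_nonneg (sq_nonneg a) (hν0 k)
    nlinarith
  have hT1 : ∑ k ∈ Finset.Icc 1 n, ∑ j ∈ Finset.Icc 1 (k-1),
      (21/100:ℝ)^(k-j) * (5 * (a^2 * ν j)) ≤ (105/79) * (a^2 * Γ₁) := by
    have hfil : ∀ k ∈ Finset.Icc 1 n,
        Finset.Icc 1 (k-1) = (Finset.Icc 1 n).filter (fun j => j < k) := by
      intro k hk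
      obtain ⟨hk1, hkn⟩ := Finset.mem_Icc.mp hk
      ext j
      simp only [Finset.mem_Icc, Finset.mem_filter]
      omega
    have e2 : ∑ k ∈ Finset.Icc 1 n, ∑ j ∈ Finset.Icc 1 (k-1),
        (21/100:ℝ)^(k-j) * (5 * (a^2 * ν j))
        = ∑ j ∈ Finset.Icc 1 n, ∑ k ∈ Finset.Icc 1 n,
          if j < k then (21/100:ℝ)^(k-j) * (5 * (a^2 * ν j)) else 0 := by
      rw [Finset.sum_comm]
      refine Finset.sum_congr rfl fun k hk => ?_
      rw [hfil k hk, Finset.sum_filter]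
    rw [e2]
    have hinner : ∀ j ∈ Finset.Icc 1 n, ∑ k ∈ Finset.Icc 1 n,
        (if j < k then (21/100:ℝ)^(k-j) * (5 * (a^2 * ν j)) else 0)
        ≤ (21/79) * (5 * (a^2 * ν j)) := by
      intro j hj
      rw [← Finset.sum_filter, ← Finset.sum_mul]
      refine mul_le_mul_of_nonneg_right ?_ (mul_nonneg (by norm_num) (mul_nonneg (sq_nonneg a) (hν0 j)))
      refine le_trans (sum_geo_shift (by norm_num) (by norm_num) _ j (fun k hk =>
        (Finset.mem_filter.mp hk).2)) (le_of_eq hgeoconst)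
    refine le_trans (Finset.sum_le_sum hinner) ?_
    rw [hΓ, Finset.mul_sum, Finset.mul_sum]
    refine Finset.sum_le_sum fun j hj => ?_
    have := mul_nonneg (sq_nonneg a) (hν0 j)
    nlinarith
  have hsumc : ∑ k ∈ Finset.Icc 1 n, c k
      ≤ (a^2/2) * Γ₁ + ((105/79) * (a^2 * Γ₁) + (105/79) * (a^2 * Γ₁)) := by
    have e3 : ∑ k ∈ Finset.Icc 1 n, c k
        = ∑ k ∈ Finset.Icc 1 n, b * ν k
          + ∑ k ∈ Finset.Icc 1 n, ∑ j ∈ Finset.Icc 1 (k-1),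
            (21/10:ℝ)^(k-j) * ∏ i ∈ Finset.Icc j k, d i := by
      rw [← Finset.sum_add_distrib]
    rw [e3]
    refine add_le_add hsum1 ?_
    have hstep : ∑ k ∈ Finset.Icc 1 n, ∑ j ∈ Finset.Icc 1 (k-1),
        (21/10:ℝ)^(k-j) * ∏ i ∈ Finset.Icc j k, d i
        ≤ ∑ k ∈ Finset.Icc 1 n, ∑ j ∈ Finset.Icc 1 (k-1),
          ((21/100:ℝ)^(k-j) * (5 * (a^2 * ν j)) + (21/100:ℝ)^(k-j) * (5 * (a^2 * ν k))) := by
      refine Finset.sum_le_sum fun k hk => Finset.sum_le_sum fun j hj => ?_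
      refine le_trans (hDSterm k hk j hj) (le_of_eq ?_)
      ring
    refine le_trans hstep ?_
    rw [show ∀ (F G : ℕ → ℕ → ℝ), (∑ k ∈ Finset.Icc 1 n, ∑ j ∈ Finset.Icc 1 (k-1),
        (F k j + G k j)) = (∑ k ∈ Finset.Icc 1 n, ∑ j ∈ Finset.Icc 1 (k-1), F k j)
        + ∑ k ∈ Finset.Icc 1 n, ∑ j ∈ Finset.Icc 1 (k-1), G k j from fun F G => by
      rw [← Finset.sum_add_distrib]
      exact Finset.sum_congr rfl fun k _ => by rw [← Finset.sum_add_distrib]]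
    exact add_le_add hT1 hT2
  -- conclusion
  calc ‖∑ k ∈ Finset.Icc 1 n,
        ∑' j : ℕ, (-1 : ℂ) ^ j * (heinrichPhi μ X u k - 1) ^ (j + 1) / (j + 1)‖
      ≤ ∑ k ∈ Finset.Icc 1 n,
        ‖∑' j : ℕ, (-1 : ℂ) ^ j * (heinrichPhi μ X u k - 1) ^ (j + 1) / (j + 1)‖ :=
        norm_sum_le _ _
    _ ≤ ∑ k ∈ Finset.Icc 1 n, (25/24) * c k := Finset.sum_le_sum fun k hk => htsum k hk
    _ = (25/24) * ∑ k ∈ Finset.Icc 1 n, c k := by rw [Finset.mul_sum]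
    _ ≤ 4 * a ^ 2 * Γ₁ := by
        have h17 : 0 ≤ a^2 * Γ₁ := mul_nonneg (sq_nonneg a) hΓ0
        nlinarith [hsumc, Finset.sum_nonneg (fun k (_ : k ∈ Finset.Icc 1 n) => hc0 k)]
end
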